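/- arXiv:2511.04815 — 4 statements merged into one kernel-verified Lean document; each statement's English description precedes it below -/
import Mathlib

section
/- The number of Dyck words of semilength n avoiding the factor UUU equals the Motzkin number M_n = sum over j of binom(n,2j)·C_j, where C_j is the j-th Catalan number. -/
/-- A Dyck word of semilength `n`. -/
def IsDyckWord (n : ℕ) (l : List Bool) : Prop :=
  l.count true = n ∧ l.count false = n ∧
    ∀ p : List Bool, p <+: l → p.count false ≤ p.count true

namespace Stmt2Aux

open List

/-- Block encoding of Motzkin steps. -/
def blk : Option Bool → List Bool
  | some true => [true, true, false]
  | some false => [false]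
  | none => [true, false]

def phi (m : List (Option Bool)) : List Bool := m.flatMap blk

@[simp] lemma phi_nil : phi [] = [] := rfl
@[simp] lemma phi_cons (x : Option Bool) (m : List (Option Bool)) :
    phi (x :: m) = blk x ++ phi m := rfl

lemma phi_append (a b : List (Option Bool)) : phi (a ++ b) = phi a ++ phi b :=
  List.flatMap_append ..

lemma count_false_phi (m : List (Option Bool)) : (phi m).count false = m.length := by
  induction m with
  | nil => rfl
  | cons x m ih =>
    rcases x with _ | (_ | _) <;>
      simp [blk, List.count_append, List.count_cons, ih] <;> omega

lemma count_true_phi (m : List (Option Bool)) :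
    (phi m).count true + m.count (some false) = m.length + m.count (some true) := by
  induction m with
  | nil => rfl
  | cons x m ih =>
    rcases x with _ | (_ | _) <;>
      simp [blk, List.count_append, List.count_cons] <;> omega

lemma phi_injective : Function.Injective phi := by
  intro m1
  induction m1 with
  | nil =>
    intro m2 h
    cases m2 with
    | nil => rfl
    | cons y m2 =>
      exfalso
      rcases y with _ | (_ | _) <;> simp [blk] at h
  | cons x m1 ih =>
    intro m2 h
    cases m2 with
    | nil =>
      exfalso
      rcases x with _ | (_ | _) <;> simp [blk] at h
    | cons y m2 =>
      simp only [phi_cons] at h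
      rcases x with _ | (_ | _) <;> rcases y with _ | (_ | _) <;>
        simp only [blk, List.cons_append, List.nil_append] at h <;>
        simp at h ⊢ <;>
        exact ih h

lemma not_ttt_prefix_drop (m : List (Option Bool)) :
    ∀ i, ¬ [true, true, true] <+: (phi m).drop i := by
  induction m with
  | nil =>
    intro i h
    simp [phi] at h
  | cons x m ih =>
    intro i h
    rw [phi_cons, List.drop_append] at h
    by_cases hi : (blk x).length ≤ i
    · rw [List.drop_eq_nil_of_le hi, List.nil_append] at h
      exact ih _ h
    · push_neg at hi
      rcases x with _ | (_ | _) <;> simp only [blk, List.length_cons, List.length_nil] at hi h <;>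
        interval_cases i <;>
        · obtain ⟨t, ht⟩ := h
          simp at ht

lemma not_ttt (m : List (Option Bool)) : ¬ [true, true, true] <:+: phi m := by
  rw [List.infix_iff_prefix_suffix]
  rintro ⟨t, hpre, hsuf⟩
  obtain ⟨p, hp⟩ := hsuf
  have ht : t = (phi m).drop p.length := by rw [← hp, List.drop_left]
  exact not_ttt_prefix_drop m p.length (ht ▸ hpre)

lemma prefix_phi_decomp :
    ∀ (m : List (Option Bool)) (p' : List Bool), p' <+: phi m →
      ∃ p q, p <+: m ∧ (q = [] ∨ q = [true] ∨ q = [true, true]) ∧ p' = phi p ++ q := by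
  intro m
  induction m with
  | nil =>
    intro p' h
    rw [phi_nil, List.prefix_nil] at h
    exact ⟨[], [], List.nil_prefix, Or.inl rfl, by simp [h]⟩
  | cons x m ih =>
    intro p' h
    rw [phi_cons] at h
    rcases List.prefix_or_prefix_of_prefix h (List.prefix_append (blk x) (phi m)) with h1 | h1
    · -- p' is a prefix of blk x
      obtain ⟨t, ht⟩ := h1
      rcases x with _ | (_ | _) <;>
        simp only [blk] at ht <;>
        rcases p' with _ | ⟨a, _ | ⟨b, _ | ⟨c, p'⟩⟩⟩ <;>
        simp only [List.cons_append, List.nil_append, List.cons.injEq,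
          List.append_eq_nil_iff] at ht
      -- none : p' = []
      · exact ⟨[], [], List.nil_prefix, Or.inl rfl, rfl⟩
      -- none : p' = [a] with a = true
      · exact ⟨[], [true], List.nil_prefix, Or.inr (Or.inl rfl), by simp_all [phi]⟩
      -- none : p' = [a, b] = [true, false]
      · exact ⟨[none], [], (List.cons_prefix_cons).2 ⟨rfl, List.nil_prefix⟩,
          Or.inl rfl, by simp_all [phi, blk]⟩
      · simp at ht
      -- some false : p' = []
      · exact ⟨[], [], List.nil_prefix, Or.inl rfl, rfl⟩
      -- some false : p' = [a] = [false]
      · exact ⟨[some false], [], (List.cons_prefix_cons).2 ⟨rfl, List.nil_prefix⟩,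
          Or.inl rfl, by simp_all [phi, blk]⟩
      · simp at ht
      · simp at ht
      -- some true : p' = []
      · exact ⟨[], [], List.nil_prefix, Or.inl rfl, rfl⟩
      -- some true : p' = [a] = [true]
      · exact ⟨[], [true], List.nil_prefix, Or.inr (Or.inl rfl), by simp_all [phi]⟩
      -- some true : p' = [a, b] = [true, true]
      · exact ⟨[], [true, true], List.nil_prefix, Or.inr (Or.inr rfl), by simp_all [phi]⟩
      -- some true : p' = [a, b, c] = [true, true, false]
      · exact ⟨[some true], [], (List.cons_prefix_cons).2 ⟨rfl, List.nil_prefix⟩,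
          Or.inl rfl, by simp_all [phi, blk]⟩
    · -- blk x is a prefix of p'
      obtain ⟨p'', rfl⟩ := h1
      have h2 : p'' <+: phi m := by
        obtain ⟨t, ht⟩ := h
        rw [List.append_assoc] at ht
        exact ⟨t, List.append_cancel_left ht⟩
      obtain ⟨p, q, hp, hq, rfl⟩ := ih p'' h2
      exact ⟨x :: p, q, (List.cons_prefix_cons).2 ⟨rfl, hp⟩, hq, by
        rw [phi_cons, List.append_assoc]⟩

/-- The greedy parser: inverse of `phi` on UUU-avoiding words. -/
def psi : List Bool → List (Option Bool)
  | [] => []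
  | false :: r => some false :: psi r
  | true :: false :: r => none :: psi r
  | true :: true :: false :: r => some true :: psi r
  | true :: true :: true :: _ => []
  | [true] => []
  | [true, true] => []

lemma phi_psi : ∀ w : List Bool,
    (∀ s, s <:+ w → s.count true ≤ s.count false) →
    (∀ s, s <:+ w → ¬ [true, true, true] <+: s) →
    phi (psi w) = w := by
  intro w
  induction w using psi.induct with
  | case1 => intro _ _; rfl
  | case2 r ih =>
    intro h1 h2
    have hr : r <:+ false :: r := List.suffix_cons _ _
    rw [psi, phi_cons,
      ih (fun s hs => h1 s (hs.trans hr)) (fun s hs => h2 s (hs.trans hr))]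
    rfl
  | case3 r ih =>
    intro h1 h2
    have hr : r <:+ true :: false :: r :=
      (List.suffix_cons _ _).trans (List.suffix_cons _ _)
    rw [psi, phi_cons,
      ih (fun s hs => h1 s (hs.trans hr)) (fun s hs => h2 s (hs.trans hr))]
    rfl
  | case4 r ih =>
    intro h1 h2
    have hr : r <:+ true :: true :: false :: r :=
      ((List.suffix_cons _ _).trans (List.suffix_cons _ _)).trans (List.suffix_cons _ _)
    rw [psi, phi_cons,
      ih (fun s hs => h1 s (hs.trans hr)) (fun s hs => h2 s (hs.trans hr))]
    rfl
  | case5 r =>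
    intro _ h2
    exact absurd ⟨r, rfl⟩ (h2 _ List.suffix_rfl)
  | case6 =>
    intro h1 _
    simpa using h1 [true] List.suffix_rfl
  | case7 =>
    intro h1 _
    simpa using h1 [true, true] List.suffix_rfl

/-- A Motzkin word of length `n`. -/
def IsMotzkin (n : ℕ) (m : List (Option Bool)) : Prop :=
  m.length = n ∧ m.count (some true) = m.count (some false) ∧
    ∀ p, p <+: m → p.count (some false) ≤ p.count (some true)

lemma phi_mem {n : ℕ} {m : List (Option Bool)} (hm : IsMotzkin n m) :
    IsDyckWord n (phi m) ∧ ¬ [true, true, true] <:+: phi m := by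
  obtain ⟨hlen, hcnt, hpre⟩ := hm
  refine ⟨⟨?_, ?_, ?_⟩, not_ttt m⟩
  · have := count_true_phi m; omega
  · rw [count_false_phi]; exact hlen
  · intro p' hp'
    obtain ⟨p, q, hp, hq, rfl⟩ := prefix_phi_decomp m p' hp'
    have key : (phi p).count false ≤ (phi p).count true := by
      have := count_true_phi p
      have := count_false_phi p
      have := hpre p hp
      have : p.count (some true) ≤ p.length := List.count_le_length
      omega
    rcases hq with rfl | rfl | rfl <;> simp [List.count_append] <;> omega

lemma psi_mem {n : ℕ} {w : List Bool} (hw : IsDyckWord n w)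
    (httt : ¬ [true, true, true] <:+: w) :
    IsMotzkin n (psi w) ∧ phi (psi w) = w := by
  obtain ⟨hct, hcf, hpre⟩ := hw
  have h1 : ∀ s, s <:+ w → s.count true ≤ s.count false := by
    intro s ⟨p, hp⟩
    have hp' : p <+: w := ⟨s, hp⟩
    have := hpre p hp'
    have e1 : p.count true + s.count true = n := by
      rw [← hct, ← hp, List.count_append]
    have e2 : p.count false + s.count false = n := by
      rw [← hcf, ← hp, List.count_append]
    omega
  have h2 : ∀ s, s <:+ w → ¬ [true, true, true] <+: s := by
    intro s hs hp
    exact httt (List.infix_iff_prefix_suffix.2 ⟨s, hp, hs⟩)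
  have hphi : phi (psi w) = w := phi_psi w h1 h2
  refine ⟨⟨?_, ?_, ?_⟩, hphi⟩
  · have := count_false_phi (psi w)
    rw [hphi] at this
    omega
  · have := count_true_phi (psi w)
    have h3 := count_false_phi (psi w)
    rw [hphi] at this h3
    omega
  · intro p hp
    have hphip : phi p <+: w := by
      obtain ⟨t, ht⟩ := hp
      rw [← hphi, ← ht, phi_append]
      exact ⟨phi t, rfl⟩
    have := hpre (phi p) hphip
    have := count_true_phi p
    have := count_false_phi p
    omega

/-- Stage A: Motzkin words of length `n` are in bijection with UUU-avoiding Dyck words. -/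
noncomputable def equivA (n : ℕ) :
    {m : List (Option Bool) // IsMotzkin n m} ≃
      {w : List Bool // IsDyckWord n w ∧ ¬ [true, true, true] <:+: w} :=
  Equiv.ofBijective (fun m => ⟨phi m.1, phi_mem m.2⟩) (by
    constructor
    · intro a b h
      exact Subtype.ext (phi_injective (congrArg Subtype.val h))
    · rintro ⟨w, hw, httt⟩
      obtain ⟨hmz, hphi⟩ := psi_mem hw httt
      exact ⟨⟨psi w, hmz⟩, Subtype.ext hphi⟩)

/-! ### Interleaving: decomposing a Motzkin word into a mask and a Dyck word -/

def itl : List Bool → List Bool → List (Option Bool)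
  | [], _ => []
  | false :: mk, w => none :: itl mk w
  | true :: _, [] => []
  | true :: mk, b :: w => some b :: itl mk w

lemma length_itl : ∀ (mk w : List Bool), mk.count true ≤ w.length →
    (itl mk w).length = mk.length := by
  intro mk
  induction mk with
  | nil => intro w _; rfl
  | cons b mk ih =>
    intro w h
    cases b with
    | false =>
      rw [itl, List.length_cons, List.length_cons, ih w (by simpa [List.count_cons] using h)]
    | true =>
      cases w with
      | nil => simp [List.count_cons] at h
      | cons c w =>
        rw [itl, List.length_cons, List.length_cons, ih w ?_]
        simp [List.count_cons] at h
        omega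

lemma map_isSome_itl : ∀ (mk w : List Bool), mk.count true ≤ w.length →
    (itl mk w).map Option.isSome = mk := by
  intro mk
  induction mk with
  | nil => intro w _; rfl
  | cons b mk ih =>
    intro w h
    cases b with
    | false =>
      rw [itl, List.map_cons, ih w (by simpa [List.count_cons] using h)]
      rfl
    | true =>
      cases w with
      | nil => simp [List.count_cons] at h
      | cons c w =>
        rw [itl, List.map_cons, ih w ?_]
        · rfl
        · simp [List.count_cons] at h
          omega

lemma filterMap_id_itl : ∀ (mk w : List Bool), mk.count true = w.length →
    (itl mk w).filterMap id = w := by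
  intro mk
  induction mk with
  | nil =>
    intro w h
    cases w with
    | nil => rfl
    | cons c w => simp at h
  | cons b mk ih =>
    intro b2 h
    cases b with
    | false =>
      rw [itl]
      simp only [List.filterMap_cons, id_eq]
      exact ih b2 (by simpa [List.count_cons] using h)
    | true =>
      cases b2 with
      | nil => simp [List.count_cons] at h
      | cons c w =>
        rw [itl]
        simp only [List.filterMap_cons, id_eq]
        rw [show filterMap (fun x => x) (itl mk w) = filterMap id (itl mk w) from rfl, ih w ?_]
        simp [List.count_cons] at h
        omega

lemma itl_map_filterMap : ∀ m : List (Option Bool),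
    itl (m.map Option.isSome) (m.filterMap id) = m := by
  intro m
  induction m with
  | nil => rfl
  | cons x m ih =>
    rcases x with _ | b <;>
      simp only [List.map_cons, List.filterMap_cons, id_eq, Option.isSome_none,
        Option.isSome_some] <;>
      rw [itl, show filterMap (fun x => x) m = filterMap id m from rfl, ih]

lemma count_filterMap_id (m : List (Option Bool)) (b : Bool) :
    (m.filterMap id).count b = m.count (some b) := by
  induction m with
  | nil => rfl
  | cons x m ih =>
    rcases x with _ | c <;>
      simpa [List.filterMap_cons, List.count_cons] using ih

lemma prefix_filterMap {p m : List (Option Bool)} (h : p <+: m) :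
    p.filterMap id <+: m.filterMap id := by
  obtain ⟨t, rfl⟩ := h
  rw [List.filterMap_append]
  exact ⟨t.filterMap id, rfl⟩

lemma prefix_of_prefix_filterMap :
    ∀ (m : List (Option Bool)) (q : List Bool), q <+: m.filterMap id →
      ∃ p, p <+: m ∧ q = p.filterMap id := by
  intro m
  induction m with
  | nil =>
    intro q h
    rw [List.filterMap_nil, List.prefix_nil] at h
    exact ⟨[], List.prefix_rfl, by simp [h]⟩
  | cons x m ih =>
    intro q h
    rcases x with _ | b
    · rw [List.filterMap_cons] at h
      obtain ⟨p, hp, rfl⟩ := ih q h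
      exact ⟨none :: p, (List.cons_prefix_cons).2 ⟨rfl, hp⟩, by simp⟩
    · rw [List.filterMap_cons] at h
      simp only [id] at h
      cases q with
      | nil => exact ⟨[], List.nil_prefix, rfl⟩
      | cons c q =>
        rw [List.cons_prefix_cons] at h
        obtain ⟨hc, hq⟩ := h
        obtain ⟨p, hp, rfl⟩ := ih q hq
        exact ⟨some b :: p, (List.cons_prefix_cons).2 ⟨rfl, hp⟩, by simp [hc]⟩

lemma length_eq_counts (l : List Bool) : l.length = l.count true + l.count false := by
  induction l with
  | nil => rfl
  | cons b l ih => cases b <;> simp [List.count_cons] <;> omega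

lemma count_true_map_isSome (m : List (Option Bool)) :
    (m.map Option.isSome).count true = m.count (some true) + m.count (some false) := by
  induction m with
  | nil => rfl
  | cons x m ih =>
    rcases x with _ | (_ | _) <;> simp [List.count_cons] <;> omega

lemma mask_spec {n j : ℕ} {m : List (Option Bool)}
    (h : IsMotzkin n m ∧ m.count (some true) = j) :
    (m.map Option.isSome).length = n ∧ (m.map Option.isSome).count true = 2 * j := by
  obtain ⟨⟨hlen, hcnt, -⟩, hj⟩ := h
  refine ⟨by simpa using hlen, ?_⟩
  rw [count_true_map_isSome]
  omega

lemma dyck_spec {n j : ℕ} {m : List (Option Bool)}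
    (h : IsMotzkin n m ∧ m.count (some true) = j) :
    IsDyckWord j (m.filterMap id) := by
  obtain ⟨⟨hlen, hcnt, hpre⟩, hj⟩ := h
  refine ⟨?_, ?_, ?_⟩
  · rw [count_filterMap_id]; omega
  · rw [count_filterMap_id]; omega
  · intro p hp
    obtain ⟨p', hp', rfl⟩ := prefix_of_prefix_filterMap m p hp
    rw [count_filterMap_id, count_filterMap_id]
    exact hpre p' hp'

lemma count_eq_len {mk w : List Bool} {j : ℕ}
    (hmk : mk.count true = 2 * j) (hwt : w.count true = j) (hwf : w.count false = j) :
    mk.count true = w.length := by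
  rw [length_eq_counts]; omega

lemma inv_spec {n j : ℕ} {mk w : List Bool}
    (hmk : mk.length = n ∧ mk.count true = 2 * j) (hw : IsDyckWord j w) :
    IsMotzkin n (itl mk w) ∧ (itl mk w).count (some true) = j := by
  obtain ⟨hmklen, hmkcnt⟩ := hmk
  obtain ⟨hwt, hwf, hwpre⟩ := hw
  have hlen : mk.count true = w.length := count_eq_len hmkcnt hwt hwf
  refine ⟨⟨?_, ?_, ?_⟩, ?_⟩
  · rw [length_itl mk w hlen.le]; exact hmklen
  · rw [← count_filterMap_id, ← count_filterMap_id, filterMap_id_itl mk w hlen]; omega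
  · intro p hp
    rw [← count_filterMap_id, ← count_filterMap_id]
    refine hwpre _ ?_
    have := prefix_filterMap hp
    rwa [filterMap_id_itl mk w hlen] at this
  · rw [← count_filterMap_id, filterMap_id_itl mk w hlen]; exact hwt

/-- Stage B: Motzkin words of length `n` with `j` up-steps correspond to pairs
(mask, Dyck word). -/
noncomputable def equivB (n j : ℕ) :
    {m : List (Option Bool) // IsMotzkin n m ∧ m.count (some true) = j} ≃
      ({mask : List Bool // mask.length = n ∧ mask.count true = 2 * j} ×
        {w : List Bool // IsDyckWord j w}) where
  toFun m := (⟨m.1.map Option.isSome, mask_spec m.2⟩, ⟨m.1.filterMap id, dyck_spec m.2⟩)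
  invFun x := ⟨itl x.1.1 x.2.1, inv_spec x.1.2 x.2.2⟩
  left_inv m := Subtype.ext (itl_map_filterMap m.1)
  right_inv := by
    rintro ⟨⟨mk, hmk⟩, ⟨w, hw⟩⟩
    have hlen : mk.count true = w.length :=
      count_eq_len hmk.2 hw.1 hw.2.1
    exact Prod.ext (Subtype.ext (map_isSome_itl mk w hlen.le))
      (Subtype.ext (filterMap_id_itl mk w hlen))

/-! ### Counting masks -/

lemma ncard_mask : ∀ n k : ℕ,
    {l : List Bool | l.length = n ∧ l.count true = k}.ncard = n.choose k := by
  intro n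
  induction n with
  | zero =>
    intro k
    cases k with
    | zero =>
      have : {l : List Bool | l.length = 0 ∧ l.count true = 0} = {([] : List Bool)} := by
        ext l
        simp [List.length_eq_zero_iff]
        rintro rfl
        simp
      rw [this, Set.ncard_singleton]
      rfl
    | succ k =>
      have : {l : List Bool | l.length = 0 ∧ l.count true = k + 1} = ∅ := by
        ext l
        simp [List.length_eq_zero_iff]
        rintro rfl
        simp
      rw [this, Set.ncard_empty]
      simp
  | succ n ih =>
    intro k
    have hfin : ∀ a b : ℕ, {l : List Bool | l.length = a ∧ l.count true = b}.Finite :=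
      fun a b => (List.finite_length_eq Bool a).subset (fun l hl => hl.1)
    cases k with
    | zero =>
      have hset : {l : List Bool | l.length = n + 1 ∧ l.count true = 0} =
          (List.cons false) '' {l : List Bool | l.length = n ∧ l.count true = 0} := by
        ext l
        constructor
        · rintro ⟨hlen, hcnt⟩
          rcases l with _ | ⟨b, l⟩
          · simp at hlen
          · cases b
            · exact ⟨l, ⟨by simpa using hlen, by simpa [List.count_cons] using hcnt⟩, rfl⟩
            · simp [List.count_cons] at hcnt
        · rintro ⟨l, ⟨h1, h2⟩, rfl⟩
          exact ⟨by simp [h1], by simp [List.count_cons, h2]⟩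
      rw [hset, Set.ncard_image_of_injective _ (List.cons_injective), ih 0]
      simp
    | succ k =>
      have hset : {l : List Bool | l.length = n + 1 ∧ l.count true = k + 1} =
          (List.cons true) '' {l : List Bool | l.length = n ∧ l.count true = k} ∪
          (List.cons false) '' {l : List Bool | l.length = n ∧ l.count true = k + 1} := by
        ext l
        constructor
        · rintro ⟨hlen, hcnt⟩
          rcases l with _ | ⟨b, l⟩
          · simp at hlen
          · cases b
            · exact Or.inr ⟨l, ⟨by simpa using hlen, by simpa [List.count_cons] using hcnt⟩, rfl⟩
            · refine Or.inl ⟨l, ⟨by simpa using hlen, ?_⟩, rfl⟩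
              simp [List.count_cons] at hcnt
              omega
        · rintro (⟨l, ⟨h1, h2⟩, rfl⟩ | ⟨l, ⟨h1, h2⟩, rfl⟩)
          · exact ⟨by simp [h1], by simp [List.count_cons, h2]⟩
          · exact ⟨by simp [h1], by simp [List.count_cons, h2]⟩
      have hdisj : Disjoint
          ((List.cons true) '' {l : List Bool | l.length = n ∧ l.count true = k})
          ((List.cons false) '' {l : List Bool | l.length = n ∧ l.count true = k + 1}) := by
        rw [Set.disjoint_left]
        rintro l ⟨a, _, rfl⟩ ⟨b, _, hb⟩
        simp at hb
      rw [hset, Set.ncard_union_eq hdisj ((hfin n k).image _) ((hfin n (k + 1)).image _),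
        Set.ncard_image_of_injective _ List.cons_injective,
        Set.ncard_image_of_injective _ List.cons_injective, ih k, ih (k + 1),
        Nat.choose_succ_succ]

lemma card_mask (n k : ℕ) :
    Nat.card {l : List Bool // l.length = n ∧ l.count true = k} = n.choose k := by
  rw [← ncard_mask n k, ← Nat.card_coe_set_eq]
  rfl

/-! ### Counting Dyck words -/

def stp : Bool → DyckStep
  | true => DyckStep.U
  | false => DyckStep.D

def stq : DyckStep → Bool
  | DyckStep.U => true
  | DyckStep.D => false

lemma stp_injective : Function.Injective stp := by
  intro a b h
  cases a <;> cases b <;> simp [stp] at h ⊢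

lemma stq_injective : Function.Injective stq := by
  intro a b h
  cases a <;> cases b <;> simp [stq] at h ⊢

noncomputable def equivDW (j : ℕ) :
    {w : List Bool // IsDyckWord j w} ≃ {p : DyckWord // p.semilength = j} where
  toFun w := by
    obtain ⟨w, hct, hcf, hpre⟩ := w
    refine ⟨⟨w.map stp, ?_, ?_⟩, ?_⟩
    · show (w.map stp).count (stp true) = (w.map stp).count (stp false)
      rw [List.count_map_of_injective _ _ stp_injective,
        List.count_map_of_injective _ _ stp_injective, hct, hcf]
    · intro i
      show ((w.map stp).take i).count (stp false) ≤ ((w.map stp).take i).count (stp true)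
      rw [← List.map_take, List.count_map_of_injective _ _ stp_injective,
        List.count_map_of_injective _ _ stp_injective]
      exact hpre _ (List.take_prefix i w)
    · show (w.map stp).count (stp true) = j
      rw [List.count_map_of_injective _ _ stp_injective, hct]
  invFun p := by
    obtain ⟨p, hp⟩ := p
    refine ⟨p.toList.map stq, ?_, ?_, ?_⟩
    · show (p.toList.map stq).count (stq DyckStep.U) = j
      rw [List.count_map_of_injective _ _ stq_injective]
      exact hp
    · show (p.toList.map stq).count (stq DyckStep.D) = j
      rw [List.count_map_of_injective _ _ stq_injective, ← p.count_U_eq_count_D]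
      exact hp
    · intro q hq
      obtain ⟨i, rfl⟩ : ∃ i, q = (p.toList.take i).map stq :=
        ⟨q.length, by rw [List.map_take, ← List.prefix_iff_eq_take.mp hq]⟩
      show ((p.toList.take i).map stq).count (stq DyckStep.D) ≤
        ((p.toList.take i).map stq).count (stq DyckStep.U)
      rw [List.count_map_of_injective _ _ stq_injective,
        List.count_map_of_injective _ _ stq_injective]
      exact p.count_D_le_count_U i
  left_inv := by
    rintro ⟨w, hct, hcf, hpre⟩
    refine Subtype.ext ?_
    show (w.map stp).map stq = w
    rw [List.map_map]
    have : stq ∘ stp = id := by funext b; cases b <;> rfl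
    rw [this, List.map_id]
  right_inv := by
    rintro ⟨p, hp⟩
    refine Subtype.ext (DyckWord.ext ?_)
    show (p.toList.map stq).map stp = p.toList
    rw [List.map_map]
    have : stp ∘ stq = id := by funext s; cases s <;> rfl
    rw [this, List.map_id]

lemma card_dyck (j : ℕ) :
    Nat.card {w : List Bool // IsDyckWord j w} = catalan j := by
  rw [Nat.card_congr (equivDW j), Nat.card_eq_fintype_card,
    DyckWord.card_dyckWord_semilength_eq_catalan]

/-! ### Counting Motzkin words -/

lemma card_motzkin (n : ℕ) :
    Nat.card {m : List (Option Bool) // IsMotzkin n m} =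
      ∑ j ∈ Finset.range (n + 1), n.choose (2 * j) * catalan j := by
  classical
  set S : Set (List (Option Bool)) := {m | IsMotzkin n m} with hS_def
  have hS : S.Finite := (List.finite_length_eq (Option Bool) n).subset (fun m hm => hm.1)
  have h1 : Nat.card {m : List (Option Bool) // IsMotzkin n m} = hS.toFinset.card := by
    rw [← Set.ncard_eq_toFinset_card S hS]
    exact Nat.card_coe_set_eq S
  rw [h1, Finset.card_eq_sum_card_fiberwise
    (f := fun m => m.count (some true)) (t := Finset.range (n + 1)) ?_]
  · refine Finset.sum_congr rfl fun j _ => ?_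
    have hSj : {m : List (Option Bool) | IsMotzkin n m ∧ m.count (some true) = j}.Finite :=
      hS.subset (fun m hm => hm.1)
    have h2 : hS.toFinset.filter (fun m => m.count (some true) = j) = hSj.toFinset := by
      ext m
      simp only [Finset.mem_filter, Set.Finite.mem_toFinset, hS_def, Set.mem_setOf_eq]
    rw [h2, ← Set.ncard_eq_toFinset_card _ hSj, ← Nat.card_coe_set_eq]
    have h3 : Nat.card {m : List (Option Bool) // IsMotzkin n m ∧ m.count (some true) = j} =
        n.choose (2 * j) * catalan j := by
      rw [Nat.card_congr (equivB n j), Nat.card_prod, card_mask, card_dyck]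
    exact h3
  · intro m hm
    rw [Finset.mem_coe, Set.Finite.mem_toFinset] at hm
    have h4 : m.count (some true) ≤ m.length := List.count_le_length
    show m.count (some true) ∈ Finset.range (n + 1)
    rw [Finset.mem_range]
    have := hm.1
    omega

end Stmt2Aux

/-- The number of Dyck words of semilength `n` avoiding the factor `UUU` equals the
Motzkin number `M_n = ∑_j binom(n,2j)·C_j`. -/
theorem stmt_2 (n : ℕ) :
    {l : List Bool | IsDyckWord n l ∧ ¬ [true, true, true] <:+: l}.ncard =
      ∑ j ∈ Finset.range (n + 1), n.choose (2 * j) * catalan j := by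
  rw [← Nat.card_coe_set_eq, ← Stmt2Aux.card_motzkin n]
  exact Nat.card_congr (Stmt2Aux.equivA n).symm
end

section
/- The number of UUU-avoiding Dyck words of semilength n having exactly j occurrences of the factor UU equals binom(n,2j)·C_j, where C_j is the j-th Catalan number. -/
def blk : Option Bool → List Bool
  | some true => [true, true, false]
  | some false => [false]
  | none => [true, false]

def decode : List (Option Bool) → List Bool
  | [] => []
  | a :: x => blk a ++ decode x

/-- The number of occurrences of `pat` as a (contiguous) factor of `l`. -/
def countFactor (pat l : List Bool) : ℕ :=
  ((List.range l.length).filter fun i => pat.isPrefixOf (l.drop i)).length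

lemma decode_count_false (x : List (Option Bool)) : (decode x).count false = x.length := by
  induction x with
  | nil => rfl
  | cons a x ih => rcases a with _ | (_ | _) <;> simp [decode, blk, ih]

lemma decode_count_true (x : List (Option Bool)) :
    (decode x).count true = 2 * x.count (some true) + x.count none := by
  induction x with
  | nil => rfl
  | cons a x ih => rcases a with _ | (_ | _) <;> simp [decode, blk, ih] <;> omega

lemma length_eq_counts (x : List (Option Bool)) :
    x.length = x.count (some true) + x.count (some false) + x.count none := by
  induction x with
  | nil => rfl
  | cons a x ih => rcases a with _ | (_ | _) <;> simp [ih] <;> omega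

lemma filterMap_count (x : List (Option Bool)) (b : Bool) :
    (x.filterMap id).count b = x.count (some b) := by
  induction x with
  | nil => rfl
  | cons a x ih =>
    rcases a with _ | c
    · simpa using ih
    · by_cases h : c = b <;> simpa [h, List.count_cons] using ih

lemma countFactor_cons (pat : List Bool) (a : Bool) (l : List Bool) :
    countFactor pat (a :: l) = countFactor pat l + if pat.isPrefixOf (a :: l) then 1 else 0 := by
  have key : List.filter ((fun i => pat.isPrefixOf ((a :: l).drop i)) ∘ Nat.succ)
      (List.range l.length) = List.filter (fun i => pat.isPrefixOf (l.drop i))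
      (List.range l.length) := List.filter_congr fun i _ => rfl
  cases h : pat.isPrefixOf (a :: l) with
  | false =>
    simp only [h, if_neg Bool.false_ne_true, Nat.add_zero]
    unfold countFactor
    rw [List.length_cons, List.range_succ_eq_map, List.filter_cons, List.filter_map]
    simp only [List.drop_zero, h, if_neg Bool.false_ne_true, List.length_map]
    rw [key]
  | true =>
    simp only [h, if_pos rfl]
    unfold countFactor
    rw [List.length_cons, List.range_succ_eq_map, List.filter_cons, List.filter_map]
    simp only [List.drop_zero, h, if_pos rfl, List.length_cons, List.length_map]
    rw [key]
    simp [Nat.add_comm]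

lemma countFactor_tt_decode (x : List (Option Bool)) :
    countFactor [true, true] (decode x) = x.count (some true) := by
  induction x with
  | nil => rfl
  | cons a x ih =>
    rcases a with _ | (_ | _) <;>
      simp [decode, blk, countFactor_cons, List.isPrefixOf, ih, List.count_cons]

lemma countFactor_ttt_decode (x : List (Option Bool)) :
    countFactor [true, true, true] (decode x) = 0 := by
  induction x with
  | nil => rfl
  | cons a x ih =>
    rcases a with _ | (_ | _) <;>
      simp [decode, blk, countFactor_cons, List.isPrefixOf, ih]

lemma countFactor_pos_of_infix (pat l : List Bool) (hp : pat ≠ []) (h : pat <:+: l) :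
    countFactor pat l ≠ 0 := by
  obtain ⟨s, t, rfl⟩ := h
  induction s with
  | nil =>
    rcases pat with _ | ⟨b, pat⟩
    · exact absurd rfl hp
    · rw [List.nil_append, List.cons_append, countFactor_cons]
      have : (b :: pat).isPrefixOf ((b :: pat) ++ t) = true := by
        rw [List.isPrefixOf_iff_prefix]; exact ⟨t, rfl⟩
      rw [List.cons_append] at this
      simp [this]
  | cons a s ih =>
    rw [List.append_assoc] at ih ⊢
    rw [List.cons_append, countFactor_cons]
    intro hc
    exact ih (by omega)

def encode : List Bool → List (Option Bool)
  | [] => []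
  | false :: r => some false :: encode r
  | true :: false :: r => none :: encode r
  | true :: true :: false :: r => some true :: encode r
  | true :: true :: true :: _ => []
  | [true] => []
  | [true, true] => []

lemma decode_height (x : List (Option Bool)) (h : ℤ) (h0 : 0 ≤ h)
    (hx : ∀ q : List Bool, q <+: x.filterMap id → (q.count false : ℤ) ≤ q.count true + h) :
    ∀ p : List Bool, p <+: decode x → (p.count false : ℤ) ≤ p.count true + h := by
  induction x generalizing h with
  | nil =>
    intro p hp
    rw [List.prefix_nil.mp hp]
    simpa using h0
  | cons a x ih =>
    rcases a with _ | (_ | _)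
    · -- none : blk = [true, false]
      intro p hp
      rcases p with _ | ⟨b, p⟩
      · simpa using h0
      · rw [show decode (none :: x) = true :: false :: decode x from rfl,
          List.cons_prefix_cons] at hp
        obtain ⟨rfl, hp⟩ := hp
        rcases p with _ | ⟨c, p⟩
        · simp; omega
        · rw [List.cons_prefix_cons] at hp
          obtain ⟨rfl, hp⟩ := hp
          have := ih h h0 (by simpa using hx) p hp
          simp only [List.count_cons]
          push_cast
          simp
          omega
    · -- some false : blk = [false]
      have h1 : (1 : ℤ) ≤ h := by
        have := hx [false] ⟨x.filterMap id, by simp⟩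
        simpa using this
      intro p hp
      rcases p with _ | ⟨b, p⟩
      · simpa using h0
      · rw [show decode (some false :: x) = false :: decode x from rfl,
          List.cons_prefix_cons] at hp
        obtain ⟨rfl, hp⟩ := hp
        have := ih (h - 1) (by omega) (fun q hq => by
          have := hx (false :: q) (by
            rw [show (some false :: x).filterMap id = false :: x.filterMap id from rfl,
              List.cons_prefix_cons]
            exact ⟨rfl, hq⟩)
          simp only [List.count_cons] at this
          push_cast at this
          simp at this
          omega) p hp
        simp only [List.count_cons]
        push_cast
        simp
        omega
    · -- some true : blk = [true, true, false]
      intro p hp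
      have key : ∀ q : List Bool, q <+: x.filterMap id →
          (q.count false : ℤ) ≤ q.count true + (h + 1) := fun q hq => by
        have := hx (true :: q) (by
          rw [show (some true :: x).filterMap id = true :: x.filterMap id from rfl,
            List.cons_prefix_cons]
          exact ⟨rfl, hq⟩)
        simp only [List.count_cons] at this
        push_cast at this
        simp at this
        omega
      rcases p with _ | ⟨b, p⟩
      · simpa using h0
      · rw [show decode (some true :: x) = true :: true :: false :: decode x from rfl,
          List.cons_prefix_cons] at hp
        obtain ⟨rfl, hp⟩ := hp
        rcases p with _ | ⟨c, p⟩
        · simp; omega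
        · rw [List.cons_prefix_cons] at hp
          obtain ⟨rfl, hp⟩ := hp
          rcases p with _ | ⟨c, p⟩
          · simp; omega
          · rw [List.cons_prefix_cons] at hp
            obtain ⟨rfl, hp⟩ := hp
            have := ih (h + 1) (by omega) key p hp
            simp only [List.count_cons]
            push_cast
            simp
            omega

lemma filterMap_height (x : List (Option Bool)) (h : ℤ) (h0 : 0 ≤ h)
    (hx : ∀ p : List Bool, p <+: decode x → (p.count false : ℤ) ≤ p.count true + h) :
    ∀ q : List Bool, q <+: x.filterMap id → (q.count false : ℤ) ≤ q.count true + h := by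
  induction x generalizing h with
  | nil =>
    intro q hq
    rw [List.prefix_nil.mp hq]
    simpa using h0
  | cons a x ih =>
    rcases a with _ | (_ | _)
    · -- none
      intro q hq
      refine ih h h0 (fun p hp => ?_) q (by simpa using hq)
      obtain ⟨t, ht⟩ := hp
      have := hx (true :: false :: p) ⟨t, by
        rw [show decode (none :: x) = true :: false :: decode x from rfl]
        simp [ht]⟩
      simp only [List.count_cons] at this
      push_cast at this
      simp at this
      omega
    · -- some false
      have h1 : (1 : ℤ) ≤ h := by
        have := hx [false] ⟨decode x, by rfl⟩
        simpa using this
      intro q hq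
      rcases q with _ | ⟨b, q⟩
      · simpa using h0
      · rw [show (some false :: x).filterMap id = false :: x.filterMap id from rfl,
          List.cons_prefix_cons] at hq
        obtain ⟨rfl, hq⟩ := hq
        have := ih (h - 1) (by omega) (fun p hp => by
          obtain ⟨t, ht⟩ := hp
          have := hx (false :: p) ⟨t, by
            rw [show decode (some false :: x) = false :: decode x from rfl]
            simp [ht]⟩
          simp only [List.count_cons] at this
          push_cast at this
          simp at this
          omega) q hq
        simp only [List.count_cons]
        push_cast
        simp
        omega
    · -- some true
      intro q hq
      rcases q with _ | ⟨b, q⟩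
      · simpa using h0
      · rw [show (some true :: x).filterMap id = true :: x.filterMap id from rfl,
          List.cons_prefix_cons] at hq
        obtain ⟨rfl, hq⟩ := hq
        have := ih (h + 1) (by omega) (fun p hp => by
          obtain ⟨t, ht⟩ := hp
          have := hx (true :: true :: false :: p) ⟨t, by
            rw [show decode (some true :: x) = true :: true :: false :: decode x from rfl]
            simp [ht]⟩
          simp only [List.count_cons] at this
          push_cast at this
          simp at this
          omega) q hq
        simp only [List.count_cons]
        push_cast
        simp
        omega

lemma decode_injective : ∀ x y : List (Option Bool), decode x = decode y → x = y := by
  intro x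
  induction x with
  | nil =>
    intro y hy
    rcases y with _ | ⟨b, y⟩
    · rfl
    · rcases b with _ | (_ | _) <;> simp [decode, blk] at hy
  | cons a x ih =>
    intro y hy
    rcases y with _ | ⟨b, y⟩
    · rcases a with _ | (_ | _) <;> simp [decode, blk] at hy
    · rcases a with _ | (_ | _) <;> rcases b with _ | (_ | _) <;>
        simp [decode, blk] at hy <;> rw [ih y hy]

lemma decode_encode : ∀ l : List Bool, ¬ [true, true, true] <:+: l →
    (∀ s : List Bool, s <:+ l → s.count true ≤ s.count false) → decode (encode l) = l := by
  intro l
  induction l using encode.induct with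
  | case1 => intro _ _; rfl
  | case2 r ih =>
    intro h1 h2
    rw [encode, show decode (some false :: encode r) = false :: decode (encode r) from rfl,
      ih (fun h => h1 (h.trans (List.suffix_cons false r).isInfix))
        (fun s hs => h2 s (hs.trans (List.suffix_cons false r)))]
  | case3 r ih =>
    intro h1 h2
    have hsuf : r <:+ true :: false :: r := ⟨[true, false], rfl⟩
    rw [encode, show decode (none :: encode r) = true :: false :: decode (encode r) from rfl,
      ih (fun h => h1 (h.trans hsuf.isInfix)) (fun s hs => h2 s (hs.trans hsuf))]
  | case4 r ih =>
    intro h1 h2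
    have hsuf : r <:+ true :: true :: false :: r := ⟨[true, true, false], rfl⟩
    rw [encode, show decode (some true :: encode r) = true :: true :: false :: decode (encode r)
      from rfl, ih (fun h => h1 (h.trans hsuf.isInfix)) (fun s hs => h2 s (hs.trans hsuf))]
  | case5 t =>
    intro h1 _
    exact absurd ⟨[], t, rfl⟩ h1
  | case6 =>
    intro _ h2
    have := h2 [true] List.suffix_rfl
    simp at this
  | case7 =>
    intro _ h2
    have := h2 [true, true] List.suffix_rfl
    simp at this

def merge : List Bool → List Bool → List (Option Bool)
  | [], _ => []
  | false :: m, w => none :: merge m w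
  | true :: _, [] => []
  | true :: m, c :: w => some c :: merge m w

lemma merge_roundtrip (x : List (Option Bool)) :
    merge (x.map Option.isSome) (x.filterMap id) = x := by
  induction x with
  | nil => rfl
  | cons a x ih => rcases a with _ | c <;> simpa [merge] using ih

lemma filterMap_merge : ∀ (m w : List Bool), w.length = m.count true →
    (merge m w).filterMap id = w := by
  intro m
  induction m with
  | nil =>
    intro w hw
    have : w = [] := List.length_eq_zero_iff.mp (by simpa using hw)
    subst this
    rfl
  | cons a m ih =>
    intro w hw
    cases a with
    | false => simpa [merge] using ih w (by simpa using hw)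
    | true =>
      rcases w with _ | ⟨c, w⟩
      · simp [List.count_cons] at hw
      · simp [List.count_cons] at hw
        simpa [merge] using ih w (by omega)

lemma map_isSome_merge : ∀ (m w : List Bool), w.length = m.count true →
    (merge m w).map Option.isSome = m := by
  intro m
  induction m with
  | nil => intro w hw; rfl
  | cons a m ih =>
    intro w hw
    cases a with
    | false => simpa [merge] using ih w (by simpa using hw)
    | true =>
      rcases w with _ | ⟨c, w⟩
      · simp [List.count_cons] at hw
      · simp [List.count_cons] at hw
        simp [merge, ih w (by omega)]

lemma length_merge : ∀ (m w : List Bool), w.length = m.count true →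
    (merge m w).length = m.length := by
  intro m
  induction m with
  | nil => intro w hw; rfl
  | cons a m ih =>
    intro w hw
    cases a with
    | false => simpa [merge] using ih w (by simpa using hw)
    | true =>
      rcases w with _ | ⟨c, w⟩
      · simp [List.count_cons] at hw
      · simp [List.count_cons] at hw
        simp [merge, ih w (by omega)]

lemma length_bool (l : List Bool) : l.length = l.count true + l.count false := by
  induction l with
  | nil => rfl
  | cons a l ih =>
    cases a <;> simp only [List.count_cons, List.length_cons] <;> simp <;> omega

lemma count_map_isSome (x : List (Option Bool)) :
    (x.map Option.isSome).count true = x.count (some true) + x.count (some false) := by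
  induction x with
  | nil => rfl
  | cons a x ih => rcases a with _ | (_ | _) <;> simp [List.count_cons, ih] <;> omega

lemma count_true_ofFn {n : ℕ} (f : Fin n → Bool) :
    (List.ofFn f).count true = (Finset.univ.filter fun i => f i = true).card := by
  rw [Finset.card_filter]
  induction n with
  | zero => simp
  | succ n ih =>
    rw [List.ofFn_succ, List.count_cons, ih, Fin.sum_univ_succ]
    cases h : f 0 <;> simp [h] <;> ring

lemma card_lists (n k : ℕ) :
    Nat.card {m : List Bool // m.length = n ∧ m.count true = k} = n.choose k := by
  have hb : Function.Bijective
      (fun s : {s : Finset (Fin n) // s.card = k} =>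
        (⟨List.ofFn (fun i => decide (i ∈ s.1)), by
          constructor
          · simp
          · rw [count_true_ofFn]
            convert s.2 using 2
            ext i
            simp⟩ : {m : List Bool // m.length = n ∧ m.count true = k})) := by
    constructor
    · rintro ⟨s, hs⟩ ⟨t, ht⟩ h
      simp only [Subtype.mk.injEq] at h ⊢
      have := List.ofFn_injective h
      ext i
      have := congrFun this i
      simpa using this
    · rintro ⟨m, hm, hc⟩
      subst hm
      refine ⟨⟨Finset.univ.filter fun i => m.get i = true, ?_⟩, ?_⟩
      · rw [← count_true_ofFn, List.ofFn_get, hc]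
      · ext1
        refine List.ext_get (by simp) fun i h1 h2 => ?_
        simp
  rw [← Nat.card_eq_of_bijective _ hb, Nat.card_eq_fintype_card, Fintype.card_finset_len,
    Fintype.card_fin]

open DyckStep in
def stepOf (b : Bool) : DyckStep := bif b then U else D

open DyckStep in
lemma count_map_stepOf (l : List Bool) :
    (l.map stepOf).count U = l.count true ∧ (l.map stepOf).count D = l.count false := by
  induction l with
  | nil => simp
  | cons a l ih => cases a <;> simp [stepOf, List.count_cons, ih.1, ih.2]

open DyckStep in
def boolOf : DyckStep → Bool
  | U => true
  | D => false

open DyckStep in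
lemma count_map_boolOf (l : List DyckStep) :
    (l.map boolOf).count true = l.count U ∧ (l.map boolOf).count false = l.count D := by
  induction l with
  | nil => simp
  | cons a l ih => cases a <;> simp [boolOf, List.count_cons, ih.1, ih.2]

lemma map_stepOf_boolOf (l : List DyckStep) : (l.map boolOf).map stepOf = l := by
  rw [List.map_map]
  have : stepOf ∘ boolOf = id := by funext s; cases s <;> rfl
  rw [this, List.map_id]

open DyckStep in
lemma card_dyck (j : ℕ) : Nat.card {w : List Bool // IsDyckWord j w} = catalan j := by
  have hb : Function.Bijective
      (fun w : {w : List Bool // IsDyckWord j w} =>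
        (⟨⟨w.1.map stepOf, by
            rw [(count_map_stepOf w.1).1, (count_map_stepOf w.1).2, w.2.1, w.2.2.1], fun i => by
            rw [← List.map_take, (count_map_stepOf _).1, (count_map_stepOf _).2]
            exact w.2.2.2 _ (List.take_prefix i w.1)⟩, by
          show (w.1.map stepOf).count U = j
          rw [(count_map_stepOf w.1).1, w.2.1]⟩ :
          {p : DyckWord // p.semilength = j})) := by
    constructor
    · rintro ⟨v, hv⟩ ⟨w, hw⟩ h
      simp only [Subtype.mk.injEq, DyckWord.mk.injEq] at h ⊢
      refine List.map_injective_iff.mpr ?_ h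
      intro a b hab
      cases a <;> cases b <;> simp [stepOf] at hab ⊢
    · rintro ⟨⟨l, hUD, hpre⟩, hsl⟩
      have hsl' : l.count U = j := hsl
      refine ⟨⟨l.map boolOf, (count_map_boolOf l).1.trans hsl',
        (count_map_boolOf l).2.trans (hUD ▸ hsl'), fun p hp => ?_⟩, ?_⟩
      · rw [List.prefix_iff_eq_take.mp hp, ← List.map_take, (count_map_boolOf _).1,
          (count_map_boolOf _).2]
        exact hpre _
      · simp only [Subtype.mk.injEq, DyckWord.mk.injEq]
        exact map_stepOf_boolOf l
  rw [Nat.card_eq_of_bijective _ hb, Nat.card_eq_fintype_card,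
    DyckWord.card_dyckWord_semilength_eq_catalan]

lemma card_X (n j : ℕ) :
    Nat.card {x : List (Option Bool) // x.length = n ∧ IsDyckWord j (x.filterMap id)} =
      n.choose (2 * j) * catalan j := by
  have hb : Function.Bijective (fun p :
      ({m : List Bool // m.length = n ∧ m.count true = 2 * j} ×
        {w : List Bool // IsDyckWord j w}) =>
      (⟨merge p.1.1 p.2.1, by
        obtain ⟨⟨m, hml, hmc⟩, ⟨w, hw⟩⟩ := p
        have hlw : w.length = m.count true := by
          rw [length_bool w, hw.1, hw.2.1, hmc]; ring
        exact ⟨(length_merge m w hlw).trans hml, by rw [filterMap_merge m w hlw]; exact hw⟩⟩ :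
      {x : List (Option Bool) // x.length = n ∧ IsDyckWord j (x.filterMap id)})) := by
    constructor
    · rintro ⟨⟨m, hml, hmc⟩, ⟨w, hw⟩⟩ ⟨⟨m', hml', hmc'⟩, ⟨w', hw'⟩⟩ h
      simp only [Subtype.mk.injEq] at h
      have hlw : w.length = m.count true := by
        rw [length_bool w, hw.1, hw.2.1, hmc]; ring
      have hlw' : w'.length = m'.count true := by
        rw [length_bool w', hw'.1, hw'.2.1, hmc']; ring
      have h1 : m = m' := by
        rw [← map_isSome_merge m w hlw, ← map_isSome_merge m' w' hlw', h]
      have h2 : w = w' := by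
        rw [← filterMap_merge m w hlw, ← filterMap_merge m' w' hlw', h]
      simp only [Prod.mk.injEq, Subtype.mk.injEq]
      exact ⟨h1, h2⟩
    · rintro ⟨x, hlen, hdw⟩
      refine ⟨⟨⟨x.map Option.isSome, by simpa using hlen, ?_⟩, ⟨x.filterMap id, hdw⟩⟩, ?_⟩
      · rw [count_map_isSome, ← filterMap_count x true, ← filterMap_count x false,
          hdw.1, hdw.2.1]
        ring
      · exact Subtype.ext (merge_roundtrip x)
  rw [← Nat.card_eq_of_bijective _ hb, Nat.card_prod, card_lists, card_dyck]

/-- The number of `UUU`-avoiding Dyck words of semilength `n` having exactly `j`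
occurrences of the factor `UU` equals `binom(n,2j)·C_j`. -/
theorem stmt_3 (n j : ℕ) :
    {l : List Bool | IsDyckWord n l ∧ ¬ [true, true, true] <:+: l ∧
        countFactor [true, true] l = j}.ncard =
      n.choose (2 * j) * catalan j := by
  rw [← Nat.card_coe_set_eq, ← card_X n j]
  have hb : Function.Bijective (fun x :
      {x : List (Option Bool) // x.length = n ∧ IsDyckWord j (x.filterMap id)} =>
      (⟨decode x.1, by
        obtain ⟨x, hlen, hct, hcf, hpre⟩ := x
        dsimp only
        have hB : x.count (some true) = j := by rw [← filterMap_count x true]; exact hct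
        have hA : x.count (some false) = j := by rw [← filterMap_count x false]; exact hcf
        have hle := length_eq_counts x
        refine ⟨⟨?_, ?_, ?_⟩, ?_, ?_⟩
        · rw [decode_count_true]; omega
        · rw [decode_count_false]; exact hlen
        · intro p hp
          have := decode_height x 0 le_rfl (fun q hq => by
            have := hpre q hq; push_cast; omega) p hp
          omega
        · intro hin
          exact countFactor_pos_of_infix _ _ (by simp) hin (countFactor_ttt_decode x)
        · rw [countFactor_tt_decode]; exact hB⟩ :
      {l : List Bool // l ∈ {l : List Bool | IsDyckWord n l ∧ ¬ [true, true, true] <:+: l ∧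
        countFactor [true, true] l = j}})) := by
    constructor
    · rintro ⟨x, hx⟩ ⟨y, hy⟩ h
      simp only [Subtype.mk.injEq] at h ⊢
      exact decode_injective x y h
    · rintro ⟨l, ⟨hct, hcf, hpre⟩, hni, hcnt⟩
      have hdec : decode (encode l) = l := by
        refine decode_encode l hni fun s hs => ?_
        obtain ⟨p, hp⟩ := hs
        have h1 : p.count false ≤ p.count true := hpre p ⟨s, hp⟩
        have h2 := congrArg (List.count true) hp
        have h3 := congrArg (List.count false) hp
        rw [List.count_append, hct] at h2
        rw [List.count_append, hcf] at h3
        omega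
      have hB : (encode l).count (some true) = j := by
        rw [← countFactor_tt_decode, hdec, hcnt]
      have hlen : (encode l).length = n := by
        rw [← decode_count_false, hdec, hcf]
      have hctd := decode_count_true (encode l)
      rw [hdec, hct] at hctd
      have hle := length_eq_counts (encode l)
      refine ⟨⟨encode l, hlen, ?_, ?_, ?_⟩, Subtype.ext hdec⟩
      · rw [filterMap_count]; exact hB
      · rw [filterMap_count]; omega
      · intro q hq
        have := filterMap_height (encode l) 0 le_rfl (fun p hp => by
          rw [hdec] at hp
          have := hpre p hp; push_cast; omega) q hq
        omega
  exact (Nat.card_eq_of_bijective _ hb).symm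
end

section
/- For nonnegative integers n and j with 1 ≤ j ≤ n/2 and any k ≥ 0, the number of Dyck-type lattice paths from (0,0) to (n, n-2j) (up steps (1,1), down steps (1,-1), never below the x-axis) having exactly k peaks equals the coefficient of x^k in C(n,j,x) = sum_{m=1}^{j} ((n+1-2j)/m)·binom(n-j,m-1)·binom(j-1,m-1)·x^m. -/
namespace Stmt7Aux

lemma countFactor_nil (pat : List Bool) : countFactor pat [] = 0 := rfl

lemma countFactor_cons (pat : List Bool) (x : Bool) (l : List Bool) :
    countFactor pat (x :: l) = (if pat.isPrefixOf (x :: l) then 1 else 0) + countFactor pat l := by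
  unfold countFactor
  rw [List.length_cons, List.range_succ_eq_map, List.filter_cons]
  by_cases h : pat.isPrefixOf (x :: l) <;>
    simp [h, List.filter_map, Function.comp_def, List.drop_succ_cons, Nat.add_comm]

lemma cf_append (l m : List Bool) (hm : m ≠ []) :
    countFactor [true, false] (l ++ m) =
      countFactor [true, false] l + countFactor [true, false] m +
        (if l.getLast? = some true ∧ m.head? = some false then 1 else 0) := by
  induction l with
  | nil => simp [countFactor_nil]
  | cons x l ih =>
    cases l with
    | nil =>
      cases m with
      | nil => exact absurd rfl hm
      | cons y m' =>
        rw [List.cons_append, List.nil_append, countFactor_cons, countFactor_cons]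
        simp only [List.isPrefixOf, List.getLast?_singleton, List.head?_cons, countFactor_nil]
        cases x <;> cases y <;>
          simp [show countFactor [true, false] [true] = 0 from by decide,
            show countFactor [true, false] [false] = 0 from by decide, Nat.add_comm]
    | cons z l' =>
      have h1 : ([true, false] : List Bool).isPrefixOf (x :: (z :: l' ++ m))
          = ([true, false] : List Bool).isPrefixOf (x :: z :: l') := by
        simp [List.isPrefixOf]
      have h2 : (x :: z :: l').getLast? = (z :: l').getLast? := by
        simp [List.getLast?_cons_cons]
      rw [List.cons_append, countFactor_cons, ih]
      conv_rhs => rw [countFactor_cons]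
      rw [h1, h2]
      ring
lemma cf_concat_true (l : List Bool) :
    countFactor [true, false] (l ++ [true]) = countFactor [true, false] l := by
  rw [cf_append l [true] (by simp)]
  simp [show countFactor [true, false] [true] = 0 from by decide]

lemma cf_concat_TF (l : List Bool) :
    countFactor [true, false] (l ++ [true, false]) = countFactor [true, false] l + 1 := by
  rw [cf_append l [true, false] (by simp)]
  simp [show countFactor [true, false] [true, false] = 1 from by decide]

lemma cf_concat_false (l : List Bool) (hl : l.getLast? ≠ some true) :
    countFactor [true, false] (l ++ [false]) = countFactor [true, false] l := by
  rw [cf_append l [false] (by simp)]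
  simp [show countFactor [true, false] [false] = 0 from by decide, hl]

lemma prefix_concat_cases {p l : List Bool} {c : Bool} (h : p <+: l ++ [c]) :
    p <+: l ∨ p = l ++ [c] := by
  rcases h with ⟨t, ht⟩
  rcases List.eq_nil_or_concat t with rfl | ⟨t', d, rfl⟩
  · right; simpa using ht
  · left
    rw [List.concat_eq_append, ← List.append_assoc] at ht
    have := congrArg List.dropLast ht
    rw [List.dropLast_concat, List.dropLast_concat] at this
    exact ⟨t', this⟩

/-- The set of paths with `a` up steps, `b` down steps, staying nonnegative,
with exactly `k` peaks. -/
def S (a b k : ℕ) : Set (List Bool) :=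
  {l : List Bool | l.count true = a ∧ l.count false = b ∧
    (∀ p : List Bool, p <+: l → p.count false ≤ p.count true) ∧
    countFactor [true, false] l = k}

lemma length_eq_counts (l : List Bool) : l.length = l.count true + l.count false := by
  induction l with
  | nil => simp
  | cons x l ih => cases x <;> simp [List.count_cons] <;> omega

lemma S_finite (a b k : ℕ) : (S a b k).Finite := by
  apply (List.finite_length_eq Bool (a + b)).subset
  rintro l ⟨h1, h2, -, -⟩
  simp only [Set.mem_setOf_eq, length_eq_counts, h1, h2]

lemma S_subset_lt {a b k : ℕ} (hab : a < b) : S a b k = ∅ := by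
  ext l
  simp only [S, Set.mem_setOf_eq, Set.mem_empty_iff_false, iff_false, not_and]
  intro h1 h2 h3
  have := h3 l (List.prefix_refl l)
  omega

lemma noTF_no_false {l : List Bool} (h : countFactor [true, false] (true :: l) = 0) :
    false ∉ l := by
  induction l with
  | nil => simp
  | cons x l ih =>
    rw [countFactor_cons] at h
    cases x with
    | false => simp [List.isPrefixOf] at h
    | true =>
      simp only [List.mem_cons]
      rintro (h' | h')
      · exact absurd h'.symm (by simp)
      · exact ih (by omega) h'

lemma S_k0 {a b k : ℕ} (hb : 1 ≤ b) (hk : k = 0) : S a b k = ∅ := by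
  subst hk
  ext l
  simp only [S, Set.mem_setOf_eq, Set.mem_empty_iff_false, iff_false, not_and]
  intro h1 h2 h3 h4
  have hmem : false ∈ l := by rw [← List.count_pos_iff]; omega
  cases l with
  | nil => simp at hmem
  | cons x l' =>
    cases x with
    | false =>
      have := h3 [false] ⟨l', rfl⟩
      simp at this
    | true =>
      have := noTF_no_false h4
      simp only [List.mem_cons] at hmem
      rcases hmem with h' | h'
      · exact absurd h'.symm (by simp)
      · exact this h'

lemma cf_replicate_true (a : ℕ) : countFactor [true, false] (List.replicate a true) = 0 := by
  induction a with
  | zero => rfl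
  | succ n ih =>
    rw [List.replicate_succ, countFactor_cons, ih]
    cases n with
    | zero => decide
    | succ m => simp [List.replicate_succ, List.isPrefixOf]

lemma count_true_replicate (a : ℕ) : (List.replicate a true).count true = a := by
  induction a with
  | zero => rfl
  | succ n ih => simp [List.replicate_succ, List.count_cons, ih]

lemma count_false_replicate (a : ℕ) : (List.replicate a true).count false = 0 := by
  induction a with
  | zero => rfl
  | succ n ih => simp [List.replicate_succ, List.count_cons, ih]

lemma S_b0 (a k : ℕ) : S a 0 k = if k = 0 then {List.replicate a true} else ∅ := by
  ext l
  split_ifs with hk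
  · subst hk
    simp only [S, Set.mem_setOf_eq, Set.mem_singleton_iff]
    constructor
    · rintro ⟨h1, h2, -, -⟩
      have : ∀ x ∈ l, x = true := by
        intro x hx
        cases x
        · exact absurd hx (List.count_eq_zero.mp h2)
        · rfl
      exact List.eq_replicate_iff.mpr ⟨by rw [length_eq_counts, h1, h2]; omega, this⟩
    · rintro rfl
      refine ⟨count_true_replicate a, count_false_replicate a, ?_, cf_replicate_true a⟩
      intro p hp
      have h0 := hp.sublist.count_le false
      rw [count_false_replicate] at h0
      omega
  · simp only [S, Set.mem_setOf_eq, Set.mem_empty_iff_false, iff_false, not_and]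
    intro h1 h2 h3 h4
    apply hk
    have : ∀ x ∈ l, x = true := by
      intro x hx
      cases x
      · exact absurd hx (List.count_eq_zero.mp h2)
      · rfl
    have hl : l = List.replicate l.length true := List.eq_replicate_iff.mpr ⟨rfl, this⟩
    rw [← h4, hl, cf_replicate_true]

/-- Number of nonnegative paths with `a` up steps, `b` down steps, `k` peaks. -/
noncomputable def f (a b k : ℕ) : ℕ := (S a b k).ncard

lemma mem_S {a b k : ℕ} {l : List Bool} :
    l ∈ S a b k ↔ l.count true = a ∧ l.count false = b ∧
      (∀ p : List Bool, p <+: l → p.count false ≤ p.count true) ∧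
      countFactor [true, false] l = k := Iff.rfl

lemma mem_append_true {a b k : ℕ} {l : List Bool} (hba : b ≤ a + 1) (hl : l ∈ S a b k) :
    l ++ [true] ∈ S (a + 1) b k := by
  obtain ⟨h1, h2, h3, h4⟩ := hl
  refine ⟨by simp [List.count_append, h1], by simp [List.count_append, h2], ?_, ?_⟩
  · intro p hp
    rcases prefix_concat_cases hp with hp' | rfl
    · exact h3 p hp'
    · simp [List.count_append, h1, h2]; omega
  · rw [cf_concat_true, h4]

lemma mem_append_TF {a b k : ℕ} {l : List Bool} (hba : b ≤ a) (hl : l ∈ S a b k) :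
    l ++ [true, false] ∈ S (a + 1) (b + 1) (k + 1) := by
  obtain ⟨h1, h2, h3, h4⟩ := hl
  refine ⟨by simp [List.count_append, h1], by simp [List.count_append, h2], ?_, ?_⟩
  · intro p hp
    rw [show l ++ [true, false] = (l ++ [true]) ++ [false] by simp] at hp
    rcases prefix_concat_cases hp with hp' | rfl
    · rcases prefix_concat_cases hp' with hp'' | rfl
      · exact h3 p hp''
      · simp [List.count_append, h1, h2]; omega
    · simp [List.count_append, h1, h2]; omega
  · rw [cf_concat_TF, h4]

lemma mem_append_false {a b k : ℕ} {l : List Bool} (hba : b + 1 ≤ a) (hl : l ∈ S a b k)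
    (hlast : l.getLast? = some false) : l ++ [false] ∈ S a (b + 1) k := by
  obtain ⟨h1, h2, h3, h4⟩ := hl
  refine ⟨by simp [List.count_append, h1], by simp [List.count_append, h2], ?_, ?_⟩
  · intro p hp
    rcases prefix_concat_cases hp with hp' | rfl
    · exact h3 p hp'
    · simp [List.count_append, h1, h2]; omega
  · rw [cf_concat_false l (by rw [hlast]; simp), h4]

lemma drop_last_true {a b k : ℕ} {l : List Bool} (h : l ++ [true] ∈ S (a + 1) b k) :
    l ∈ S a b k := by
  obtain ⟨h1, h2, h3, h4⟩ := h
  simp only [List.count_append] at h1 h2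
  refine ⟨by simpa using h1, by simpa using h2, ?_, ?_⟩
  · intro p hp
    exact h3 p (hp.trans ⟨[true], rfl⟩)
  · rw [← cf_concat_true l, h4]

lemma drop_last_TF {a b k : ℕ} {l : List Bool} (h : l ++ [true, false] ∈ S (a + 1) (b + 1) (k + 1)) :
    l ∈ S a b k := by
  obtain ⟨h1, h2, h3, h4⟩ := h
  simp only [List.count_append] at h1 h2
  refine ⟨by simpa using h1, by simpa using h2, ?_, ?_⟩
  · intro p hp
    exact h3 p (hp.trans ⟨[true, false], rfl⟩)
  · have := cf_concat_TF l
    omega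

lemma drop_last_false {a b k : ℕ} {l : List Bool} (hlast : l.getLast? = some false)
    (h : l ++ [false] ∈ S a (b + 1) k) : l ∈ S a b k := by
  obtain ⟨h1, h2, h3, h4⟩ := h
  simp only [List.count_append] at h1 h2
  refine ⟨by simpa using h1, by simpa using h2, ?_, ?_⟩
  · intro p hp
    exact h3 p (hp.trans ⟨[false], rfl⟩)
  · rw [← cf_concat_false l (by rw [hlast]; simp), h4]

lemma ne_nil_of_mem_S {a b k : ℕ} {l : List Bool} (hl : l ∈ S (a + 1) b k) : l ≠ [] := by
  intro h
  subst h
  exact absurd hl.1 (by simp)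

lemma f_rec (a b k : ℕ) (hba : b ≤ a) :
    f (a+1) (b+1) (k+1) + f a b (k+1) = f a (b+1) (k+1) + f a b k + f (a+1) b (k+1) := by
  classical
  set A := (fun l => l ++ [true]) '' S a (b+1) (k+1) with hA
  set B := (fun l => l ++ [true, false]) '' S a b k with hB
  set D := {m ∈ S (a+1) b (k+1) | m.getLast? = some false} with hD
  set C := (fun l => l ++ [false]) '' D with hC
  set E := (fun l => l ++ [true]) '' S a b (k+1) with hE
  have lastA : ∀ m ∈ A, m.getLast? = some true := by
    rintro m ⟨l, -, rfl⟩; exact List.getLast?_concat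
  have lastE : ∀ m ∈ E, m.getLast? = some true := by
    rintro m ⟨l, -, rfl⟩; exact List.getLast?_concat
  have lastB : ∀ m ∈ B, m.getLast? = some false ∧ m.dropLast.getLast? = some true := by
    rintro m ⟨l, -, rfl⟩
    show (l ++ [true, false]).getLast? = some false ∧ (l ++ [true, false]).dropLast.getLast? = some true
    rw [show l ++ [true, false] = (l ++ [true]) ++ [false] by simp]
    rw [List.getLast?_concat, List.dropLast_concat]
    exact ⟨rfl, List.getLast?_concat⟩
  have lastC : ∀ m ∈ C, m.getLast? = some false ∧ m.dropLast.getLast? = some false := by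
    rintro m ⟨l, hl, rfl⟩
    show (l ++ [false]).getLast? = some false ∧ (l ++ [false]).dropLast.getLast? = some false
    rw [List.getLast?_concat, List.dropLast_concat]
    exact ⟨rfl, hl.2⟩
  have lastD : ∀ m ∈ D, m.getLast? = some false := fun m hm => hm.2
  -- finiteness
  have finA : A.Finite := ((S_finite _ _ _).image _)
  have finB : B.Finite := ((S_finite _ _ _).image _)
  have finD : D.Finite := (S_finite (a+1) b (k+1)).subset (Set.sep_subset _ _)
  have finC : C.Finite := finD.image _
  have finE : E.Finite := ((S_finite _ _ _).image _)
  -- decomposition 1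
  have hS1 : S (a+1) (b+1) (k+1) = A ∪ B ∪ C := by
    ext m
    constructor
    · intro hm
      rcases List.eq_nil_or_concat m with rfl | ⟨l, c, rfl⟩
      · exact absurd rfl (ne_nil_of_mem_S hm)
      simp only [List.concat_eq_append] at hm ⊢
      cases c with
      | true => exact Or.inl (Or.inl ⟨l, drop_last_true hm, rfl⟩)
      | false =>
        have hlne : l ≠ [] := by
          intro h; subst h
          obtain ⟨h1, -, -, -⟩ := hm
          simp at h1
        rcases List.eq_nil_or_concat l with rfl | ⟨l₂, c₂, rfl⟩
        · exact absurd rfl hlne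
        simp only [List.concat_eq_append] at hm ⊢
        cases c₂ with
        | true =>
          refine Or.inl (Or.inr ⟨l₂, ?_, by simp⟩)
          apply drop_last_TF
          rw [show l₂ ++ [true, false] = (l₂ ++ [true]) ++ [false] by simp]
          exact hm
        | false =>
          refine Or.inr ⟨l₂ ++ [false], ⟨?_, List.getLast?_concat⟩, rfl⟩
          exact drop_last_false (List.getLast?_concat) hm
    · rintro ((hm | hm) | hm)
      · obtain ⟨l, hl, rfl⟩ := hm
        exact mem_append_true (by omega) hl
      · obtain ⟨l, hl, rfl⟩ := hm
        exact mem_append_TF hba hl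
      · obtain ⟨l, ⟨hl, hlast⟩, rfl⟩ := hm
        exact mem_append_false (by omega) hl hlast
  -- decomposition 2
  have hS2 : S (a+1) b (k+1) = E ∪ D := by
    ext m
    constructor
    · intro hm
      rcases List.eq_nil_or_concat m with rfl | ⟨l, c, rfl⟩
      · exact absurd rfl (ne_nil_of_mem_S hm)
      simp only [List.concat_eq_append] at hm ⊢
      cases c with
      | true => exact Or.inl ⟨l, drop_last_true hm, rfl⟩
      | false => exact Or.inr ⟨hm, List.getLast?_concat⟩
    · rintro (hm | hm)
      · obtain ⟨l, hl, rfl⟩ := hm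
        exact mem_append_true (by omega) hl
      · exact hm.1
  -- disjointness
  have dAB : Disjoint A B := by
    rw [Set.disjoint_left]
    intro m hmA hmB
    have hu := lastA m hmA
    have hv := (lastB m hmB).1
    rw [hu] at hv
    exact absurd hv (by simp)
  have dAC : Disjoint A C := by
    rw [Set.disjoint_left]
    intro m hmA hmC
    have hu := lastA m hmA
    have hv := (lastC m hmC).1
    rw [hu] at hv
    exact absurd hv (by simp)
  have dBC : Disjoint B C := by
    rw [Set.disjoint_left]
    intro m hmB hmC
    have hu := (lastB m hmB).2
    have hv := (lastC m hmC).2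
    rw [hu] at hv
    exact absurd hv (by simp)
  have dED : Disjoint E D := by
    rw [Set.disjoint_left]
    intro m hmE hmD
    have hu := lastE m hmE
    have hv := lastD m hmD
    rw [hu] at hv
    exact absurd hv (by simp)
  -- cardinalities
  have cardA : A.ncard = f a (b+1) (k+1) :=
    Set.ncard_image_of_injective _ (List.append_left_injective [true])
  have cardB : B.ncard = f a b k :=
    Set.ncard_image_of_injective _ (List.append_left_injective [true, false])
  have cardC : C.ncard = D.ncard :=
    Set.ncard_image_of_injective _ (List.append_left_injective [false])
  have cardE : E.ncard = f a b (k+1) :=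
    Set.ncard_image_of_injective _ (List.append_left_injective [true])
  have eq1 : f (a+1) (b+1) (k+1) = f a (b+1) (k+1) + f a b k + D.ncard := by
    rw [show f (a+1) (b+1) (k+1) = (S (a+1) (b+1) (k+1)).ncard from rfl, hS1,
      Set.ncard_union_eq (Set.disjoint_union_left.mpr ⟨dAC, dBC⟩) (finA.union finB) finC,
      Set.ncard_union_eq dAB finA finB, cardA, cardB, cardC]
  have eq2 : f (a+1) b (k+1) = f a b (k+1) + D.ncard := by
    rw [show f (a+1) b (k+1) = (S (a+1) b (k+1)).ncard from rfl, hS2,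
      Set.ncard_union_eq dED finE finD, cardE]
  omega

/-- The claimed formula. -/
noncomputable def Fq (a b k : ℕ) : ℚ :=
  if b = 0 then (if k = 0 then 1 else 0)
  else if 1 ≤ k ∧ k ≤ b then
    ((a : ℚ) - b + 1) / k * (a.choose (k-1)) * ((b-1).choose (k-1))
  else 0

lemma Fq_val (a b k : ℕ) (hb : 1 ≤ b) (hk : 1 ≤ k) :
    Fq a b k = ((a : ℚ) - b + 1) / k * (a.choose (k-1)) * ((b-1).choose (k-1)) := by
  unfold Fq
  rw [if_neg (by omega)]
  by_cases h : k ≤ b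
  · rw [if_pos ⟨hk, h⟩]
  · rw [if_neg (by omega), Nat.choose_eq_zero_of_lt (show b - 1 < k - 1 by omega)]
    simp

lemma key (x y K A0 A0' B0 B0' : ℚ) (hK : K ≠ 0) (hK1 : K + 1 ≠ 0)
    (hA : K * A0 = (x - K + 1) * A0') (hB : K * B0 = (y - K) * B0') :
    (x - y + 1)/(K+1) * (A0' + A0) * (B0' + B0) + (x - y + 1)/(K+1) * A0 * B0
      = (x - y)/(K+1) * A0 * (B0' + B0) + (x - y + 1)/K * A0' * B0'
        + (x - y + 2)/(K+1) * (A0' + A0) * B0 := by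
  have hA' : A0 = (x - K + 1) * A0' / K := by rw [← hA]; field_simp
  have hB' : B0 = (y - K) * B0' / K := by rw [← hB]; field_simp
  rw [hA', hB']
  field_simp
  ring

lemma Fq_rec (a b k : ℕ) (hba : b ≤ a) :
    Fq (a+1) (b+1) (k+1) + Fq a b (k+1) = Fq a (b+1) (k+1) + Fq a b k + Fq (a+1) b (k+1) := by
  by_cases hkb : k ≤ b
  · rcases Nat.eq_zero_or_pos k with rfl | hk
    · -- k = 0
      rcases Nat.eq_zero_or_pos b with rfl | hb
      · simp [Fq]
      · rw [Fq_val (a+1) (b+1) 1 (by omega) (by omega), Fq_val a b 1 (by omega) (by omega),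
          Fq_val a (b+1) 1 (by omega) (by omega), Fq_val (a+1) b 1 (by omega) (by omega),
          show Fq a b 0 = 0 by unfold Fq; rw [if_neg (by omega), if_neg (by omega)]]
        simp only [show (1:ℕ) - 1 = 0 from rfl, Nat.add_sub_cancel, Nat.choose_zero_right]
        push_cast
        ring
    · -- 1 ≤ k ≤ b
      have hb : 1 ≤ b := le_trans hk hkb
      obtain ⟨k', rfl⟩ : ∃ k', k = k' + 1 := ⟨k - 1, by omega⟩
      obtain ⟨b', rfl⟩ : ∃ b', b = b' + 1 := ⟨b - 1, by omega⟩
      have hk'b' : k' ≤ b' := by omega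
      have hb'a : b' + 1 ≤ a := hba
      rw [Fq_val (a+1) (b'+1+1) (k'+1+1) (by omega) (by omega),
        Fq_val a (b'+1) (k'+1+1) (by omega) (by omega),
        Fq_val a (b'+1+1) (k'+1+1) (by omega) (by omega),
        Fq_val a (b'+1) (k'+1) (by omega) (by omega),
        Fq_val (a+1) (b'+1) (k'+1+1) (by omega) (by omega)]
      simp only [Nat.add_sub_cancel]
      have hPA : ((a+1).choose (k'+1) : ℚ) = (a.choose k' : ℚ) + (a.choose (k'+1) : ℚ) := by
        rw [Nat.choose_succ_succ]
        push_cast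
        ring
      have hPB : ((b'+1).choose (k'+1) : ℚ) = (b'.choose k' : ℚ) + (b'.choose (k'+1) : ℚ) := by
        rw [Nat.choose_succ_succ]
        push_cast
        ring
      have hA : ((k' : ℚ) + 1) * (a.choose (k'+1)) = ((a : ℚ) - (k'+1) + 1) * (a.choose k') := by
        have := Nat.choose_succ_right_eq a k'
        have hc := congrArg (Nat.cast : ℕ → ℚ) this
        push_cast [Nat.cast_sub (show k' ≤ a by omega)] at hc
        linear_combination hc
      have hB : ((k' : ℚ) + 1) * (b'.choose (k'+1)) = (((b' : ℚ) + 1) - (k'+1)) * (b'.choose k') := by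
        have := Nat.choose_succ_right_eq b' k'
        have hc := congrArg (Nat.cast : ℕ → ℚ) this
        push_cast [Nat.cast_sub (show k' ≤ b' by omega)] at hc
        linear_combination hc
      have hkey := key (a : ℚ) ((b' : ℚ) + 1) ((k' : ℚ) + 1)
        (a.choose (k'+1) : ℚ) (a.choose k' : ℚ) (b'.choose (k'+1) : ℚ) (b'.choose k' : ℚ)
        (by positivity) (by positivity) hA hB
      rw [hPA, hPB]
      push_cast
      push_cast at hkey
      linear_combination hkey
  · -- k > b : everything vanishes
    have e1 : Fq (a+1) (b+1) (k+1) = 0 := by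
      unfold Fq; rw [if_neg (by omega), if_neg (by omega)]
    have e2 : Fq a b (k+1) = 0 := by
      unfold Fq
      split_ifs
      all_goals first | rfl | (exfalso; omega) | (exfalso; tauto)
    have e3 : Fq a (b+1) (k+1) = 0 := by
      unfold Fq; rw [if_neg (by omega), if_neg (by omega)]
    have e4 : Fq a b k = 0 := by
      unfold Fq
      split_ifs
      all_goals first | rfl | (exfalso; omega) | (exfalso; tauto)
    have e5 : Fq (a+1) b (k+1) = 0 := by
      unfold Fq
      split_ifs
      all_goals first | rfl | (exfalso; omega) | (exfalso; tauto)
    rw [e1, e2, e3, e4, e5]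
    ring

lemma f_b0 (a k : ℕ) : f a 0 k = if k = 0 then 1 else 0 := by
  rw [show f a 0 k = (S a 0 k).ncard from rfl, S_b0]
  split_ifs <;> simp

lemma f_k0 (a b : ℕ) (hb : 1 ≤ b) : f a b 0 = 0 := by
  rw [show f a b 0 = (S a b 0).ncard from rfl, S_k0 hb rfl]
  simp

lemma f_lt (a b k : ℕ) (h : a < b) : f a b k = 0 := by
  rw [show f a b k = (S a b k).ncard from rfl, S_subset_lt h]
  simp

lemma Fq_lt (a k : ℕ) : Fq a (a+1) k = 0 := by
  unfold Fq
  rw [if_neg (by omega)]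
  split_ifs with h
  · have : ((a : ℚ) - (a+1 : ℕ) + 1) = 0 := by push_cast; ring
    rw [this]
    simp
  · rfl

lemma f_eq_Fq : ∀ (N a b k : ℕ), a + b ≤ N → b ≤ a + 1 → (f a b k : ℚ) = Fq a b k := by
  intro N
  induction N with
  | zero =>
    intro a b k h hb
    obtain rfl : a = 0 := by omega
    obtain rfl : b = 0 := by omega
    rw [f_b0]
    unfold Fq
    rw [if_pos rfl]
    split_ifs <;> simp
  | succ N ih =>
    intro a b k hab hba
    rcases Nat.eq_zero_or_pos b with rfl | hb
    · rw [f_b0]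
      unfold Fq
      rw [if_pos rfl]
      split_ifs <;> simp
    rcases (show b = a + 1 ∨ b ≤ a from by omega) with h | h
    · subst h
      rw [f_lt a (a+1) k (by omega), Fq_lt]
      simp
    rcases Nat.eq_zero_or_pos k with rfl | hk
    · rw [f_k0 a b hb]
      unfold Fq
      rw [if_neg (by omega), if_neg (by omega)]
      simp
    obtain ⟨a', rfl⟩ : ∃ a', a = a' + 1 := ⟨a - 1, by omega⟩
    obtain ⟨b', rfl⟩ : ∃ b', b = b' + 1 := ⟨b - 1, by omega⟩
    obtain ⟨k', rfl⟩ : ∃ k', k = k' + 1 := ⟨k - 1, by omega⟩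
    have hrec := f_rec a' b' k' (by omega)
    have h1 := ih a' b' (k'+1) (by omega) (by omega)
    have h2 := ih a' (b'+1) (k'+1) (by omega) (by omega)
    have h3 := ih a' b' k' (by omega) (by omega)
    have h4 := ih (a'+1) b' (k'+1) (by omega) (by omega)
    have hf := Fq_rec a' b' k' (by omega)
    have hc := congrArg (Nat.cast : ℕ → ℚ) hrec
    push_cast at hc
    rw [h1, h2, h3, h4] at hc
    linarith [hf]

end Stmt7Aux

/-- For `1 ≤ j ≤ n/2` and any `k ≥ 0`, the number of lattice paths from `(0,0)` to
`(n, n-2j)` (with `n - j` up steps `true` and `j` down steps `false`, never below the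
x-axis) having exactly `k` peaks (factors `UD`) equals the coefficient of `x^k` in
`C(n,j,x) = ∑_{m=1}^{j} ((n+1-2j)/m)·binom(n-j,m-1)·binom(j-1,m-1)·x^m`. -/
theorem stmt_7 (n j k : ℕ) (hj1 : 1 ≤ j) (hj2 : 2 * j ≤ n) :
    ({l : List Bool | l.count true = n - j ∧ l.count false = j ∧
        (∀ p : List Bool, p <+: l → p.count false ≤ p.count true) ∧
        countFactor [true, false] l = k}.ncard : ℚ) =
      if 1 ≤ k ∧ k ≤ j then
        ((n : ℚ) + 1 - 2 * j) / k * ((n - j).choose (k - 1)) * ((j - 1).choose (k - 1))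
      else 0 := by
  have hmain := Stmt7Aux.f_eq_Fq n (n - j) j k (by omega) (by omega)
  have e : {l : List Bool | l.count true = n - j ∧ l.count false = j ∧
        (∀ p : List Bool, p <+: l → p.count false ≤ p.count true) ∧
        countFactor [true, false] l = k} = Stmt7Aux.S (n - j) j k := rfl
  rw [e, show (Stmt7Aux.S (n - j) j k).ncard = Stmt7Aux.f (n - j) j k from rfl, hmain]
  unfold Stmt7Aux.Fq
  rw [if_neg (by omega)]
  split_ifs with h
  · rw [Nat.cast_sub (by omega)]
    have : ((n : ℚ) - j - j + 1) / k = ((n : ℚ) + 1 - 2 * j) / k := by ring_nf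
    rw [this]
  · rfl
end

section
/- Let A and B be sparse subsets of [n-1]. Then the number of labeled balanced words with n U's and n D's that are (A,B)-compatible equals binom(2(n-|A|-|B|), n-|A|-|B|). -/
namespace Stmt10

/-- Deletion scan. State: `i` = number of `U`(true) already read, `j` = number of `D`(false). -/
def del (A B : Finset ℕ) : ℕ → ℕ → List Bool → List Bool
  | _, _, [] => []
  | i, _, [true] => if i+1 ∈ A then [] else [true]
  | i, j, true :: true :: r =>
      if i+1 ∈ A then del A B (i+1) j (true :: r) else true :: del A B (i+1) j (true :: r)
  | i, j, true :: false :: r =>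
      (if i+1 ∈ A ∨ j+1 ∈ B then id else (true :: ·))
        ((if i ∈ A ∨ j ∈ B then id else (false :: ·)) (del A B (i+1) (j+1) r))
  | i, j, false :: r =>
      (if j ∈ B then id else (false :: ·)) (del A B i (j+1) r)
termination_by _ _ l => l.length

lemma pend_mono (A : Finset ℕ) {i i' : ℕ} (h : i ≤ i') :
    (A.filter (i' < ·)).card ≤ (A.filter (i < ·)).card := by
  apply Finset.card_le_card
  intro a ha
  simp only [Finset.mem_filter] at ha ⊢
  exact ⟨ha.1, by omega⟩

lemma pend_lt (A : Finset ℕ) {i : ℕ} (h : i+1 ∈ A) :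
    (A.filter (i+2 < ·)).card < (A.filter (i < ·)).card := by
  apply Finset.card_lt_card
  constructor
  · intro a ha
    simp only [Finset.mem_filter] at ha ⊢
    exact ⟨ha.1, by omega⟩
  · intro hsub
    have := hsub (by simp [Finset.mem_filter, h] : i+1 ∈ A.filter (i < ·))
    simp [Finset.mem_filter] at this

/-- Insertion scan, the inverse of `del`. -/
def ins (A B : Finset ℕ) (i j : ℕ) (w : List Bool) : List Bool :=
  if i+1 ∈ A ∧ j+1 ∈ B then
    true :: true :: false :: false :: ins A B (i+2) (j+2) w
  else
    match w with
    | [] => []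
    | true :: r =>
        if i+1 ∈ A then true :: true :: false :: ins A B (i+2) (j+1) r
        else true :: ins A B (i+1) j r
    | false :: r =>
        if j+1 ∈ B then true :: false :: false :: ins A B (i+1) (j+2) r
        else false :: ins A B i (j+1) r
termination_by w.length + (A.filter (i < ·)).card
decreasing_by
  · rename_i h
    have := pend_lt A h.1
    omega
  · have := pend_mono A (show i ≤ i+2 by omega)
    simp only [List.length_cons]
    omega
  · have := pend_mono A (show i ≤ i+1 by omega)
    simp only [List.length_cons]
    omega
  · have := pend_mono A (show i ≤ i+1 by omega)
    simp only [List.length_cons]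
    omega
  · simp only [List.length_cons]
    omega


section Eqns
variable (A B : Finset ℕ) (i j : ℕ) (r w : List Bool)

@[simp] lemma del_nil : del A B i j [] = [] := by rw [del]

lemma del_single_true : del A B i j [true] = if i+1 ∈ A then [] else [true] := by rw [del]

lemma del_TT : del A B i j (true :: true :: r) =
    if i+1 ∈ A then del A B (i+1) j (true :: r) else true :: del A B (i+1) j (true :: r) := by
  rw [del]

lemma del_TF : del A B i j (true :: false :: r) =
    (if i+1 ∈ A ∨ j+1 ∈ B then id else (true :: ·))
      ((if i ∈ A ∨ j ∈ B then id else (false :: ·)) (del A B (i+1) (j+1) r)) := by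
  rw [del]

lemma del_F : del A B i j (false :: r) =
    (if j ∈ B then id else (false :: ·)) (del A B i (j+1) r) := by
  rw [del]

lemma ins_pair (hA : i+1 ∈ A) (hB : j+1 ∈ B) :
    ins A B i j w = true :: true :: false :: false :: ins A B (i+2) (j+2) w := by
  rw [ins.eq_def]; simp [hA, hB]

lemma ins_nil (h : ¬(i+1 ∈ A ∧ j+1 ∈ B)) : ins A B i j [] = [] := by
  rw [ins.eq_def]; simp [h]

lemma ins_T_mem (hA : i+1 ∈ A) (hB : j+1 ∉ B) :
    ins A B i j (true :: r) = true :: true :: false :: ins A B (i+2) (j+1) r := by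
  rw [ins.eq_def]; simp [hA, hB]

lemma ins_T (hA : i+1 ∉ A) :
    ins A B i j (true :: r) = true :: ins A B (i+1) j r := by
  rw [ins.eq_def]; simp [hA]

lemma ins_F_mem (hA : i+1 ∉ A) (hB : j+1 ∈ B) :
    ins A B i j (false :: r) = true :: false :: false :: ins A B (i+1) (j+2) r := by
  rw [ins.eq_def]; simp [hA, hB]

lemma ins_F (hB : j+1 ∉ B) :
    ins A B i j (false :: r) = false :: ins A B i (j+1) r := by
  rw [ins.eq_def]; simp [hB]

end Eqns

section Helpers
variable {A B : Finset ℕ}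

/-- If the output of `ins` is empty, the input was empty. -/
lemma ins_eq_nil {i j : ℕ} {w : List Bool} (h : ins A B i j w = []) : w = [] := by
  by_cases hp : i+1 ∈ A ∧ j+1 ∈ B
  · rw [ins_pair A B i j w hp.1 hp.2] at h; simp at h
  · match w with
    | [] => rfl
    | true :: r =>
      by_cases hA : i+1 ∈ A
      · have hB : j+1 ∉ B := fun hB => hp ⟨hA, hB⟩
        rw [ins_T_mem A B i j r hA hB] at h; simp at h
      · rw [ins_T A B i j r hA] at h; simp at h
    | false :: r =>
      by_cases hB : j+1 ∈ B
      · have hA : i+1 ∉ A := fun hA => hp ⟨hA, hB⟩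
        rw [ins_F_mem A B i j r hA hB] at h; simp at h
      · rw [ins_F A B i j r hB] at h; simp at h

/-- If `j+1 ∈ B` then the output of `ins` cannot start with `false`. -/
lemma ins_head_not_false {i j : ℕ} {w : List Bool} {t : List Bool}
    (hB : j+1 ∈ B) (h : ins A B i j w = false :: t) : False := by
  by_cases hp : i+1 ∈ A ∧ j+1 ∈ B
  · rw [ins_pair A B i j w hp.1 hp.2] at h; simp at h
  · have hA : i+1 ∉ A := fun hA => hp ⟨hA, hB⟩
    match w with
    | [] => rw [ins_nil A B i j hp] at h; simp at h
    | true :: r => rw [ins_T A B i j r hA] at h; simp at h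
    | false :: r => rw [ins_F_mem A B i j r hA hB] at h; simp at h

/-- Inversion: if output of `ins` starts with `false`. -/
lemma ins_cons_false {i j : ℕ} {w t : List Bool}
    (h : ins A B i j w = false :: t) :
    j+1 ∉ B ∧ ∃ w', w = false :: w' ∧ t = ins A B i (j+1) w' := by
  have hB : j+1 ∉ B := fun hB => ins_head_not_false hB h
  refine ⟨hB, ?_⟩
  by_cases hp : i+1 ∈ A ∧ j+1 ∈ B
  · exact absurd hp.2 hB
  · match w with
    | [] => rw [ins_nil A B i j hp] at h; simp at h
    | true :: r =>
      by_cases hA : i+1 ∈ A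
      · rw [ins_T_mem A B i j r hA hB] at h; simp at h
      · rw [ins_T A B i j r hA] at h; simp at h
    | false :: r =>
      rw [ins_F A B i j r hB] at h
      exact ⟨r, rfl, (List.cons.injEq _ _ _ _ ▸ h).2.symm⟩

lemma filter_step {i : ℕ} (h : i+1 ∉ A) :
    A.filter (i < ·) = A.filter (i+1 < ·) := by
  ext a
  simp only [Finset.mem_filter]
  constructor
  · rintro ⟨ha, hia⟩
    refine ⟨ha, ?_⟩
    rcases eq_or_ne a (i+1) with rfl | hne
    · exact absurd ha h
    · omega
  · rintro ⟨ha, hia⟩; exact ⟨ha, by omega⟩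

lemma filter_jump {i : ℕ} (h1 : i+1 ∈ A) (h2 : i+2 ∉ A) :
    (A.filter (i < ·)).card = (A.filter (i+2 < ·)).card + 1 := by
  have : A.filter (i < ·) = insert (i+1) (A.filter (i+2 < ·)) := by
    ext a
    simp only [Finset.mem_filter, Finset.mem_insert]
    constructor
    · rintro ⟨ha, hia⟩
      by_cases he : a = i+1
      · exact Or.inl he
      · refine Or.inr ⟨ha, ?_⟩
        by_cases he2 : a = i+2
        · exact absurd (he2 ▸ ha) h2
        · omega
    · rintro (rfl | ⟨ha, hia⟩)
      · exact ⟨h1, by omega⟩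
      · exact ⟨ha, by omega⟩
  rw [this, Finset.card_insert_of_notMem (by simp)]

lemma count_TF_length (l : List Bool) : l.count true + l.count false = l.length := by
  induction l with
  | nil => simp
  | cons a l ih => cases a <;> simp [List.count_cons] <;> omega

/-- Sparse subsets of an interval are at most half its (extended) size. -/
lemma sparse_card_le {S : Finset ℕ} (hs : ∀ s ∈ S, s+1 ∉ S) {lo hi : ℕ}
    (hS : S ⊆ Finset.Icc lo hi) : 2 * S.card ≤ hi + 2 - lo := by
  have hinj : Set.InjOn (· + 1) S := fun a _ b _ h => by simpa using h
  have hdisj : Disjoint S (S.image (· + 1)) := by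
    rw [Finset.disjoint_right]
    intro a ha ha'
    simp only [Finset.mem_image] at ha
    obtain ⟨s, hsS, rfl⟩ := ha
    exact hs s hsS ha'
  have hsub : S ∪ S.image (· + 1) ⊆ Finset.Icc lo (hi+1) := by
    intro a ha
    rcases Finset.mem_union.1 ha with h | h
    · have := hS h; simp only [Finset.mem_Icc] at this ⊢; omega
    · simp only [Finset.mem_image] at h
      obtain ⟨s, hsS, rfl⟩ := h
      have := hS hsS; simp only [Finset.mem_Icc] at this ⊢; omega
  have hcard := Finset.card_le_card hsub
  rw [Finset.card_union_of_disjoint hdisj, Finset.card_image_of_injOn hinj,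
    Nat.card_Icc] at hcard
  omega

/-- Equality case: a sparse subset of `[lo, hi]` of full size `(hi+2-lo)/2` contains `lo`. -/
lemma sparse_card_eq_mem {S : Finset ℕ} (hs : ∀ s ∈ S, s+1 ∉ S) {lo hi : ℕ}
    (hS : S ⊆ Finset.Icc lo hi) (hcard : 2 * S.card = hi + 2 - lo) (hlo : lo ≤ hi + 1) :
    lo ∈ S := by
  have hinj : Set.InjOn (· + 1) S := fun a _ b _ h => by simpa using h
  have hdisj : Disjoint S (S.image (· + 1)) := by
    rw [Finset.disjoint_right]
    intro a ha ha'
    simp only [Finset.mem_image] at ha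
    obtain ⟨s, hsS, rfl⟩ := ha
    exact hs s hsS ha'
  have hsub : S ∪ S.image (· + 1) ⊆ Finset.Icc lo (hi+1) := by
    intro a ha
    rcases Finset.mem_union.1 ha with h | h
    · have := hS h; simp only [Finset.mem_Icc] at this ⊢; omega
    · simp only [Finset.mem_image] at h
      obtain ⟨s, hsS, rfl⟩ := h
      have := hS hsS; simp only [Finset.mem_Icc] at this ⊢; omega
  have hc2 : (S ∪ S.image (· + 1)).card = (Finset.Icc lo (hi+1)).card := by
    rw [Finset.card_union_of_disjoint hdisj, Finset.card_image_of_injOn hinj, Nat.card_Icc]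
    omega
  have heq := Finset.eq_of_subset_of_card_le hsub (le_of_eq hc2.symm)
  have hlomem : lo ∈ S ∪ S.image (· + 1) := by
    rw [heq]; simp only [Finset.mem_Icc]; omega
  rcases Finset.mem_union.1 hlomem with h | h
  · exact h
  · simp only [Finset.mem_image] at h
    obtain ⟨s, hsS, hse⟩ := h
    have := hS hsS
    simp only [Finset.mem_Icc] at this
    omega

end Helpers


theorem del_ins (A B : Finset ℕ) (hAs : ∀ a ∈ A, a+1 ∉ A) (hBs : ∀ b ∈ B, b+1 ∉ B)
    (i j : ℕ) (w : List Bool) (hi : i ∉ A) (hj : j ∉ B) :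
    del A B i j (ins A B i j w) = w := by
  by_cases hp : i+1 ∈ A ∧ j+1 ∈ B
  · obtain ⟨hA1, hB1⟩ := hp
    rw [ins_pair A B i j w hA1 hB1, del_TT, if_pos hA1, del_TF,
      if_pos (Or.inr hB1 : (i+1)+1 ∈ A ∨ j+1 ∈ B), if_pos (Or.inl hA1 : i+1 ∈ A ∨ j ∈ B)]
    try simp only [id_eq]
    rw [del_F, if_pos hB1]
    try simp only [id_eq]
    exact del_ins A B hAs hBs (i+2) (j+2) w (hAs _ hA1) (hBs _ hB1)
  · match w with
    | [] => rw [ins_nil A B i j hp]; simp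
    | true :: r =>
      by_cases hA1 : i+1 ∈ A
      · have hB1 : j+1 ∉ B := fun hB => hp ⟨hA1, hB⟩
        rw [ins_T_mem A B i j r hA1 hB1, del_TT, if_pos hA1, del_TF,
          if_neg (by push_neg; exact ⟨hAs _ hA1, hB1⟩ : ¬((i+1)+1 ∈ A ∨ j+1 ∈ B)),
          if_pos (Or.inl hA1 : i+1 ∈ A ∨ j ∈ B)]
        try simp only [id_eq]
        rw [del_ins A B hAs hBs (i+2) (j+1) r (hAs _ hA1) hB1]
      · rw [ins_T A B i j r hA1]
        rcases he : ins A B (i+1) j r with _ | ⟨b, t⟩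
        · have : r = [] := ins_eq_nil he
          subst this
          rw [del_single_true, if_neg hA1]
        · cases b
          · -- e = false :: t
            obtain ⟨hB1, w', hw', ht⟩ := ins_cons_false he
            subst ht
            rw [hw']
            rw [del_TF, if_neg (by push_neg; exact ⟨hA1, hB1⟩ : ¬(i+1 ∈ A ∨ j+1 ∈ B)),
              if_neg (by push_neg; exact ⟨hi, hj⟩ : ¬(i ∈ A ∨ j ∈ B))]
            try simp only [id_eq]
            rw [del_ins A B hAs hBs (i+1) (j+1) w' hA1 hB1]
          · -- e = true :: t
            rw [del_TT, if_neg hA1, ← he, del_ins A B hAs hBs (i+1) j r hA1 hj]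
    | false :: r =>
      by_cases hB1 : j+1 ∈ B
      · have hA1 : i+1 ∉ A := fun hA => hp ⟨hA, hB1⟩
        rw [ins_F_mem A B i j r hA1 hB1, del_TF,
          if_pos (Or.inr hB1 : i+1 ∈ A ∨ j+1 ∈ B)]
        rw [if_neg (by push_neg; exact ⟨hi, hj⟩ : ¬(i ∈ A ∨ j ∈ B))]
        try simp only [id_eq]
        rw [del_F, if_pos hB1]
        try simp only [id_eq]
        rw [del_ins A B hAs hBs (i+1) (j+2) r hA1 (hBs _ hB1)]
      · rw [ins_F A B i j r hB1, del_F, if_neg hj]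
        try simp only [id_eq]
        rw [del_ins A B hAs hBs i (j+1) r hi hB1]
termination_by w.length + (A.filter (i < ·)).card
decreasing_by all_goals
  (try simp only [List.length_cons]) <;>
  first
    | (have := pend_lt A hA1; omega)
    | (have hl : r.length = w'.length + 1 := by rw [hw']; rfl
       have := pend_mono A (show i ≤ i+1 by omega); omega)
    | (have := pend_mono A (show i ≤ i+2 by omega); omega)
    | (have := pend_mono A (show i ≤ i+1 by omega); omega)
    | omega

theorem ins_spec (A B : Finset ℕ) (n : ℕ)
    (hAs : ∀ a ∈ A, a+1 ∉ A) (hBs : ∀ b ∈ B, b+1 ∉ B)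
    (hA : A ⊆ Finset.Icc 1 (n-1)) (hB : B ⊆ Finset.Icc 1 (n-1))
    (i j : ℕ) (w : List Bool) (hi : i ∉ A) (hj : j ∉ B)
    (hIT : i + w.count true + (A.filter (i < ·)).card + (B.filter (j < ·)).card = n)
    (hIF : j + w.count false + (A.filter (i < ·)).card + (B.filter (j < ·)).card = n) :
    (ins A B i j w).count true + i = n ∧ (ins A B i j w).count false + j = n ∧
    (∀ a ∈ A, i < a → ∃ u v, ins A B i j w = u ++ [true,true,false] ++ v ∧
      i + u.count true + 1 = a) ∧
    (∀ b ∈ B, j < b → ∃ u v, ins A B i j w = u ++ [true,false,false] ++ v ∧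
      j + u.count false + 1 = b) := by
  by_cases hp : i+1 ∈ A ∧ j+1 ∈ B
  · obtain ⟨hA1, hB1⟩ := hp
    have hA2 : i+2 ∉ A := hAs _ hA1
    have hB2 : j+2 ∉ B := hBs _ hB1
    have hjA := filter_jump (A := A) hA1 hA2
    have hjB := filter_jump (A := B) hB1 hB2
    obtain ⟨ih1, ih2, ihA, ihB⟩ := ins_spec A B n hAs hBs hA hB (i+2) (j+2) w hA2 hB2
      (by omega) (by omega)
    rw [ins_pair A B i j w hA1 hB1]
    refine ⟨by simp [List.count_cons]; omega, by simp [List.count_cons]; omega, ?_, ?_⟩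
    · intro a haA hia
      rcases eq_or_ne a (i+1) with rfl | hne
      · exact ⟨[], false :: ins A B (i+2) (j+2) w, by simp, by simp⟩
      · have hne2 : a ≠ i+2 := fun h => hA2 (h ▸ haA)
        obtain ⟨u, v, hu, hc⟩ := ihA a haA (by omega)
        exact ⟨true :: true :: false :: false :: u, v, by simp [hu],
          by simp [List.count_cons]; omega⟩
    · intro b hbB hjb
      rcases eq_or_ne b (j+1) with rfl | hne
      · exact ⟨[true], ins A B (i+2) (j+2) w, by simp, by simp⟩
      · have hne2 : b ≠ j+2 := fun h => hB2 (h ▸ hbB)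
        obtain ⟨u, v, hu, hc⟩ := ihB b hbB (by omega)
        exact ⟨true :: true :: false :: false :: u, v, by simp [hu],
          by simp [List.count_cons]; omega⟩
  · match w with
    | [] =>
      have hPQ : (A.filter (i < ·)).card = 0 ∧ (B.filter (j < ·)).card = 0 := by
        by_contra hcon
        have hsA : ∀ s ∈ A.filter (i < ·), s+1 ∉ A.filter (i < ·) := by
          intro s hs hs1
          exact hAs s (Finset.mem_filter.1 hs).1 (Finset.mem_filter.1 hs1).1
        have hsB : ∀ s ∈ B.filter (j < ·), s+1 ∉ B.filter (j < ·) := by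
          intro s hs hs1
          exact hBs s (Finset.mem_filter.1 hs).1 (Finset.mem_filter.1 hs1).1
        have hsubA : A.filter (i < ·) ⊆ Finset.Icc (i+1) (n-1) := by
          intro a ha
          have h1 := (Finset.mem_filter.1 ha).1
          have h2 := (Finset.mem_filter.1 ha).2
          have := hA h1
          simp only [Finset.mem_Icc] at this ⊢
          omega
        have hsubB : B.filter (j < ·) ⊆ Finset.Icc (j+1) (n-1) := by
          intro b hb
          have h1 := (Finset.mem_filter.1 hb).1
          have h2 := (Finset.mem_filter.1 hb).2
          have := hB h1
          simp only [Finset.mem_Icc] at this ⊢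
          omega
        have bA := sparse_card_le hsA hsubA
        have bB := sparse_card_le hsB hsubB
        rcases Nat.eq_zero_or_pos (A.filter (i < ·)).card with hP0 | hPpos
        · have hQpos : 0 < (B.filter (j < ·)).card := by
            rcases Nat.eq_zero_or_pos (B.filter (j < ·)).card with h | h
            · exact absurd ⟨hP0, h⟩ hcon
            · exact h
          obtain ⟨b, hb⟩ := Finset.card_pos.1 hQpos
          have := hsubB hb
          simp only [Finset.mem_Icc] at this
          simp only [List.count_nil] at hIT hIF
          omega
        · rcases Nat.eq_zero_or_pos (B.filter (j < ·)).card with hQ0 | hQpos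
          · obtain ⟨a, ha⟩ := Finset.card_pos.1 hPpos
            have := hsubA ha
            simp only [Finset.mem_Icc] at this
            simp only [List.count_nil] at hIT hIF
            omega
          · obtain ⟨a, ha⟩ := Finset.card_pos.1 hPpos
            obtain ⟨b, hb⟩ := Finset.card_pos.1 hQpos
            have haI := hsubA ha
            have hbI := hsubB hb
            simp only [Finset.mem_Icc] at haI hbI
            simp only [List.count_nil] at hIT hIF
            have heqA : 2 * (A.filter (i < ·)).card = (n-1) + 2 - (i+1) := by omega
            have heqB : 2 * (B.filter (j < ·)).card = (n-1) + 2 - (j+1) := by omega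
            have hiA : i+1 ∈ A.filter (i < ·) :=
              sparse_card_eq_mem hsA hsubA heqA (by omega)
            have hjB : j+1 ∈ B.filter (j < ·) :=
              sparse_card_eq_mem hsB hsubB heqB (by omega)
            exact hp ⟨(Finset.mem_filter.1 hiA).1, (Finset.mem_filter.1 hjB).1⟩
      obtain ⟨hP0, hQ0⟩ := hPQ
      have hAempty : A.filter (i < ·) = ∅ := Finset.card_eq_zero.1 hP0
      have hBempty : B.filter (j < ·) = ∅ := Finset.card_eq_zero.1 hQ0
      rw [ins_nil A B i j hp]
      simp only [List.count_nil] at hIT hIF ⊢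
      refine ⟨by omega, by omega, ?_, ?_⟩
      · intro a haA hia
        exact absurd (Finset.mem_filter.2 ⟨haA, hia⟩) (by simp [hAempty])
      · intro b hbB hjb
        exact absurd (Finset.mem_filter.2 ⟨hbB, hjb⟩) (by simp [hBempty])
    | true :: r =>
      by_cases hA1 : i+1 ∈ A
      · have hB1 : j+1 ∉ B := fun hB' => hp ⟨hA1, hB'⟩
        have hA2 : i+2 ∉ A := hAs _ hA1
        have hjA := filter_jump (A := A) hA1 hA2
        have hsB := filter_step (A := B) hB1
        obtain ⟨ih1, ih2, ihA, ihB⟩ := ins_spec A B n hAs hBs hA hB (i+2) (j+1) r hA2 hB1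
          (by simp only [List.count_cons] at hIT; rw [← hsB]; simp at hIT ⊢; omega)
          (by simp only [List.count_cons] at hIF; rw [← hsB]; simp at hIF ⊢; omega)
        rw [ins_T_mem A B i j r hA1 hB1]
        refine ⟨by simp [List.count_cons]; omega, by simp [List.count_cons]; omega, ?_, ?_⟩
        · intro a haA hia
          rcases eq_or_ne a (i+1) with rfl | hne
          · exact ⟨[], ins A B (i+2) (j+1) r, by simp, by simp⟩
          · have hne2 : a ≠ i+2 := fun h => hA2 (h ▸ haA)
            obtain ⟨u, v, hu, hc⟩ := ihA a haA (by omega)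
            exact ⟨true :: true :: false :: u, v, by simp [hu],
              by simp [List.count_cons]; omega⟩
        · intro b hbB hjb
          have hne : b ≠ j+1 := fun h => hB1 (h ▸ hbB)
          obtain ⟨u, v, hu, hc⟩ := ihB b hbB (by omega)
          exact ⟨true :: true :: false :: u, v, by simp [hu],
            by simp [List.count_cons]; omega⟩
      · have hsA := filter_step (A := A) hA1
        obtain ⟨ih1, ih2, ihA, ihB⟩ := ins_spec A B n hAs hBs hA hB (i+1) j r hA1 hj
          (by simp only [List.count_cons] at hIT; rw [← hsA]; simp at hIT ⊢; omega)
          (by simp only [List.count_cons] at hIF; rw [← hsA]; simp at hIF ⊢; omega)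
        rw [ins_T A B i j r hA1]
        refine ⟨by simp [List.count_cons]; omega, by simp [List.count_cons]; omega, ?_, ?_⟩
        · intro a haA hia
          have hne : a ≠ i+1 := fun h => hA1 (h ▸ haA)
          obtain ⟨u, v, hu, hc⟩ := ihA a haA (by omega)
          exact ⟨true :: u, v, by simp [hu], by simp [List.count_cons]; omega⟩
        · intro b hbB hjb
          obtain ⟨u, v, hu, hc⟩ := ihB b hbB hjb
          exact ⟨true :: u, v, by simp [hu], by simp [List.count_cons]; omega⟩
    | false :: r =>
      by_cases hB1 : j+1 ∈ B
      · have hA1 : i+1 ∉ A := fun hA' => hp ⟨hA', hB1⟩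
        have hB2 : j+2 ∉ B := hBs _ hB1
        have hjB := filter_jump (A := B) hB1 hB2
        have hsA := filter_step (A := A) hA1
        obtain ⟨ih1, ih2, ihA, ihB⟩ := ins_spec A B n hAs hBs hA hB (i+1) (j+2) r hA1 hB2
          (by simp only [List.count_cons] at hIT; rw [← hsA]; simp at hIT ⊢; omega)
          (by simp only [List.count_cons] at hIF; rw [← hsA]; simp at hIF ⊢; omega)
        rw [ins_F_mem A B i j r hA1 hB1]
        refine ⟨by simp [List.count_cons]; omega, by simp [List.count_cons]; omega, ?_, ?_⟩
        · intro a haA hia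
          have hne : a ≠ i+1 := fun h => hA1 (h ▸ haA)
          obtain ⟨u, v, hu, hc⟩ := ihA a haA (by omega)
          exact ⟨true :: false :: false :: u, v, by simp [hu],
            by simp [List.count_cons]; omega⟩
        · intro b hbB hjb
          rcases eq_or_ne b (j+1) with rfl | hne
          · exact ⟨[], ins A B (i+1) (j+2) r, by simp, by simp⟩
          · have hne2 : b ≠ j+2 := fun h => hB2 (h ▸ hbB)
            obtain ⟨u, v, hu, hc⟩ := ihB b hbB (by omega)
            exact ⟨true :: false :: false :: u, v, by simp [hu],
              by simp [List.count_cons]; omega⟩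
      · have hsB := filter_step (A := B) hB1
        obtain ⟨ih1, ih2, ihA, ihB⟩ := ins_spec A B n hAs hBs hA hB i (j+1) r hi hB1
          (by simp only [List.count_cons] at hIT; rw [← hsB]; simp at hIT ⊢; omega)
          (by simp only [List.count_cons] at hIF; rw [← hsB]; simp at hIF ⊢; omega)
        rw [ins_F A B i j r hB1]
        refine ⟨by simp [List.count_cons]; omega, by simp [List.count_cons]; omega, ?_, ?_⟩
        · intro a haA hia
          obtain ⟨u, v, hu, hc⟩ := ihA a haA hia
          exact ⟨false :: u, v, by simp [hu], by simp [List.count_cons]; omega⟩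
        · intro b hbB hjb
          have hne : b ≠ j+1 := fun h => hB1 (h ▸ hbB)
          obtain ⟨u, v, hu, hc⟩ := ihB b hbB (by omega)
          exact ⟨false :: u, v, by simp [hu], by simp [List.count_cons]; omega⟩
termination_by w.length + (A.filter (i < ·)).card
decreasing_by all_goals
  (try simp only [List.length_cons]) <;>
  first
    | (have := pend_lt A hA1; omega)
    | (have := pend_mono A (show i ≤ i+2 by omega); omega)
    | (have := pend_mono A (show i ≤ i+1 by omega); omega)
    | omega

lemma count_pos_ne_nil {u : List Bool} {b : Bool} (h : 0 < u.count b) : u ≠ [] := by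
  rintro rfl; simp at h

lemma peel {c : Bool} {t u v pat : List Bool} (hu : c :: t = u ++ pat ++ v)
    (hne : u ≠ []) : ∃ u', u = c :: u' ∧ t = u' ++ pat ++ v := by
  rcases u with _ | ⟨x, u'⟩
  · exact absurd rfl hne
  · simp only [List.cons_append, List.cons.injEq] at hu
    exact ⟨u', by rw [hu.1], hu.2⟩

section DelEq
variable (A B : Finset ℕ) (i j : ℕ) (r : List Bool)

lemma del_F_neg (h : j ∉ B) : del A B i j (false :: r) = false :: del A B i (j+1) r := by
  rw [del_F, if_neg h]

lemma del_F_pos (h : j ∈ B) : del A B i j (false :: r) = del A B i (j+1) r := by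
  rw [del_F, if_pos h]; rfl

lemma del_TF_tt (h1 : i+1 ∈ A ∨ j+1 ∈ B) (h2 : i ∈ A ∨ j ∈ B) :
    del A B i j (true :: false :: r) = del A B (i+1) (j+1) r := by
  rw [del_TF, if_pos h1, if_pos h2]; rfl

lemma del_TF_tf (h1 : i+1 ∈ A ∨ j+1 ∈ B) (h2 : ¬(i ∈ A ∨ j ∈ B)) :
    del A B i j (true :: false :: r) = false :: del A B (i+1) (j+1) r := by
  rw [del_TF, if_pos h1, if_neg h2]; rfl

lemma del_TF_ft (h1 : ¬(i+1 ∈ A ∨ j+1 ∈ B)) (h2 : i ∈ A ∨ j ∈ B) :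
    del A B i j (true :: false :: r) = true :: del A B (i+1) (j+1) r := by
  rw [del_TF, if_neg h1, if_pos h2]; rfl

lemma del_TF_ff (h1 : ¬(i+1 ∈ A ∨ j+1 ∈ B)) (h2 : ¬(i ∈ A ∨ j ∈ B)) :
    del A B i j (true :: false :: r) = true :: false :: del A B (i+1) (j+1) r := by
  rw [del_TF, if_neg h1, if_neg h2]

end DelEq

theorem del_spec (A B : Finset ℕ)
    (hAs : ∀ a ∈ A, a+1 ∉ A) (hBs : ∀ b ∈ B, b+1 ∉ B)
    (i j : ℕ) (l : List Bool) (hi : i ∉ A) (hj : j ∉ B)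
    (hCA : ∀ a ∈ A, i < a → ∃ u v, l = u ++ [true,true,false] ++ v ∧ i + u.count true + 1 = a)
    (hCB : ∀ b ∈ B, j < b → ∃ u v, l = u ++ [true,false,false] ++ v ∧ j + u.count false + 1 = b) :
    ins A B i j (del A B i j l) = l ∧
    (del A B i j l).count true + (A.filter (i < ·)).card + (B.filter (j < ·)).card
      = l.count true ∧
    (del A B i j l).count false + (A.filter (i < ·)).card + (B.filter (j < ·)).card
      = l.count false := by
  match l with
  | [] =>
    have hAe : A.filter (i < ·) = ∅ := by
      refine Finset.filter_eq_empty_iff.2 (fun {a} ha hia => ?_)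
      obtain ⟨u, v, hu, hc⟩ := hCA a ha hia
      have := congrArg List.length hu; simp at this
    have hBe : B.filter (j < ·) = ∅ := by
      refine Finset.filter_eq_empty_iff.2 (fun {b} hb hjb => ?_)
      obtain ⟨u, v, hu, hc⟩ := hCB b hb hjb
      have := congrArg List.length hu; simp at this
    have hA1 : i+1 ∉ A := fun h => by
      have : i+1 ∈ A.filter (i < ·) := Finset.mem_filter.2 ⟨h, by omega⟩
      simp [hAe] at this
    rw [del_nil, ins_nil A B i j (fun h => hA1 h.1), hAe, hBe]
    simp
  | [true] =>
    have hnofacA : ∀ a ∈ A, i < a → False := by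
      intro a ha hia
      obtain ⟨u, v, hu, hc⟩ := hCA a ha hia
      have := congrArg List.length hu; simp at this; omega
    have hnofacB : ∀ b ∈ B, j < b → False := by
      intro b hb hjb
      obtain ⟨u, v, hu, hc⟩ := hCB b hb hjb
      have := congrArg List.length hu; simp at this; omega
    have hAe : A.filter (i < ·) = ∅ :=
      Finset.filter_eq_empty_iff.2 (fun {a} ha hia => hnofacA a ha hia)
    have hBe : B.filter (j < ·) = ∅ :=
      Finset.filter_eq_empty_iff.2 (fun {b} hb hjb => hnofacB b hb hjb)
    have hA1 : i+1 ∉ A := fun h => hnofacA _ h (by omega)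
    have hA2 : i+2 ∉ A := fun h => hnofacA _ h (by omega)
    rw [del_single_true, if_neg hA1, ins_T A B i j [] hA1,
      ins_nil A B (i+1) j (fun h => hA2 h.1), hAe, hBe]
    simp
  | false :: r =>
    have hB1 : j+1 ∉ B := by
      intro hB'
      obtain ⟨u, v, hu, hc⟩ := hCB _ hB' (by omega)
      have hcu : u.count false = 0 := by omega
      rcases u with _ | ⟨x, u'⟩
      · simp at hu
      · simp only [List.cons_append, List.cons.injEq] at hu
        rw [← hu.1] at hcu
        simp [List.count_cons] at hcu
    have hCA' : ∀ a ∈ A, i < a →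
        ∃ u v, r = u ++ [true,true,false] ++ v ∧ i + u.count true + 1 = a := by
      intro a ha hia
      obtain ⟨u, v, hu, hc⟩ := hCA a ha hia
      obtain ⟨u', rfl, hr⟩ := peel hu (by rintro rfl; simp at hu)
      simp [List.count_cons] at hc
      exact ⟨u', v, hr, by omega⟩
    have hCB' : ∀ b ∈ B, j+1 < b →
        ∃ u v, r = u ++ [true,false,false] ++ v ∧ (j+1) + u.count false + 1 = b := by
      intro b hb hjb
      obtain ⟨u, v, hu, hc⟩ := hCB b hb (by omega)
      obtain ⟨u', rfl, hr⟩ := peel hu (by rintro rfl; simp at hu)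
      simp [List.count_cons] at hc
      exact ⟨u', v, hr, by omega⟩
    obtain ⟨ih1, ih2, ih3⟩ := del_spec A B hAs hBs i (j+1) r hi hB1 hCA' hCB'
    have hsB := congrArg Finset.card (filter_step (A := B) hB1)
    rw [del_F_neg A B i j r hj, ins_F A B i j _ hB1, ih1]
    refine ⟨rfl, ?_, ?_⟩ <;>
          (try simp only [show i+1+1 = i+2 from rfl, show j+1+1 = j+2 from rfl]) <;>
          (simp [List.count_cons]; omega)
  | true :: true :: r =>
    by_cases hA1 : i+1 ∈ A
    · obtain ⟨u, v, hu, hc⟩ := hCA _ hA1 (by omega)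
      have hcu : u.count true = 0 := by omega
      have hu0 : u = [] := by
        rcases u with _ | ⟨x, u'⟩
        · rfl
        · simp only [List.cons_append, List.cons.injEq] at hu
          rw [← hu.1] at hcu
          simp [List.count_cons] at hcu
      subst hu0
      simp at hu
      rw [hu] at hCA hCB ⊢
      have hA2 : i+2 ∉ A := hAs _ hA1
      by_cases hB1 : j+1 ∈ B
      · -- paired: v = false :: v'
        obtain ⟨u, v', hu', hc'⟩ := hCB _ hB1 (by omega)
        have hcu' : u.count false = 0 := by omega
        have hu1 : u = [true] := by
          rcases u with _ | ⟨x, u1⟩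
          · simp at hu'
          · rcases x with _ | _
            · simp at hu'
            · rcases u1 with _ | ⟨y, u2⟩
              · rfl
              · rcases y with _ | _
                · simp [List.count_cons] at hcu'
                · rcases u2 with _ | ⟨z, u3⟩
                  · simp at hu'
                  · rcases z with _ | _
                    · simp [List.count_cons] at hcu'
                    · simp at hu'
        subst hu1
        simp at hu'
        rw [hu'] at hCA hCB ⊢
        have hB2 : j+2 ∉ B := hBs _ hB1
        have hCA'' : ∀ a ∈ A, i+2 < a →
            ∃ u v, v' = u ++ [true,true,false] ++ v ∧ (i+2) + u.count true + 1 = a := by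
          intro a ha hia
          obtain ⟨u, v2, hp0, hc2⟩ := hCA a ha (by omega)
          obtain ⟨u1, rfl, hp1⟩ := peel hp0 (count_pos_ne_nil (b := true) (by omega))
          simp [List.count_cons] at hc2
          obtain ⟨u2, rfl, hp2⟩ := peel hp1 (count_pos_ne_nil (b := true) (by omega))
          simp [List.count_cons] at hc2
          obtain ⟨u3, rfl, hp3⟩ := peel hp2 (by rintro rfl; simp at hp2)
          simp [List.count_cons] at hc2
          obtain ⟨u4, rfl, hp4⟩ := peel hp3 (by rintro rfl; simp at hp3)
          simp [List.count_cons] at hc2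
          exact ⟨u4, v2, hp4, by omega⟩
        have hCB'' : ∀ b ∈ B, j+2 < b →
            ∃ u v, v' = u ++ [true,false,false] ++ v ∧ (j+2) + u.count false + 1 = b := by
          intro b hb hjb
          obtain ⟨u, v2, hp0, hc2⟩ := hCB b hb (by omega)
          obtain ⟨u1, rfl, hp1⟩ := peel hp0 (count_pos_ne_nil (b := false) (by omega))
          simp [List.count_cons] at hc2
          obtain ⟨u2, rfl, hp2⟩ := peel hp1 (count_pos_ne_nil (b := false) (by omega))
          simp [List.count_cons] at hc2
          obtain ⟨u3, rfl, hp3⟩ := peel hp2 (count_pos_ne_nil (b := false) (by omega))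
          simp [List.count_cons] at hc2
          obtain ⟨u4, rfl, hp4⟩ := peel hp3 (count_pos_ne_nil (b := false) (by omega))
          simp [List.count_cons] at hc2
          exact ⟨u4, v2, hp4, by omega⟩
        obtain ⟨ih1, ih2, ih3⟩ := del_spec A B hAs hBs (i+2) (j+2) v' hA2 hB2 hCA'' hCB''
        have hjA := filter_jump (A := A) hA1 hA2
        have hjB := filter_jump (A := B) hB1 hB2
        rw [del_TT, if_pos hA1,
          del_TF_tt A B (i+1) j _ (Or.inr hB1) (Or.inl hA1),
          del_F_pos A B (i+2) (j+1) _ hB1,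
          ins_pair A B i j _ hA1 hB1, ih1]
        refine ⟨rfl, ?_, ?_⟩ <;>
          (try simp only [show i+1+1 = i+2 from rfl, show j+1+1 = j+2 from rfl]) <;>
          (simp [List.count_cons]; omega)
      · -- lone A-trio: l = T T F v
        have hCA'' : ∀ a ∈ A, i+2 < a →
            ∃ u w, v = u ++ [true,true,false] ++ w ∧ (i+2) + u.count true + 1 = a := by
          intro a ha hia
          obtain ⟨u, v2, hp0, hc2⟩ := hCA a ha (by omega)
          obtain ⟨u1, rfl, hp1⟩ := peel hp0 (count_pos_ne_nil (b := true) (by omega))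
          simp [List.count_cons] at hc2
          obtain ⟨u2, rfl, hp2⟩ := peel hp1 (count_pos_ne_nil (b := true) (by omega))
          simp [List.count_cons] at hc2
          obtain ⟨u3, rfl, hp3⟩ := peel hp2 (by rintro rfl; simp at hp2)
          simp [List.count_cons] at hc2
          exact ⟨u3, v2, hp3, by omega⟩
        have hCB'' : ∀ b ∈ B, j+1 < b →
            ∃ u w, v = u ++ [true,false,false] ++ w ∧ (j+1) + u.count false + 1 = b := by
          intro b hb hjb
          obtain ⟨u, v2, hp0, hc2⟩ := hCB b hb (by omega)
          obtain ⟨u1, rfl, hp1⟩ := peel hp0 (count_pos_ne_nil (b := false) (by omega))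
          simp [List.count_cons] at hc2
          obtain ⟨u2, rfl, hp2⟩ := peel hp1 (count_pos_ne_nil (b := false) (by omega))
          simp [List.count_cons] at hc2
          obtain ⟨u3, rfl, hp3⟩ := peel hp2 (count_pos_ne_nil (b := false) (by omega))
          simp [List.count_cons] at hc2
          exact ⟨u3, v2, hp3, by omega⟩
        obtain ⟨ih1, ih2, ih3⟩ := del_spec A B hAs hBs (i+2) (j+1) v hA2 hB1 hCA'' hCB''
        have hjA := filter_jump (A := A) hA1 hA2
        have hsB := congrArg Finset.card (filter_step (A := B) hB1)
        rw [del_TT, if_pos hA1,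
          del_TF_ft A B (i+1) j _ (by push_neg; exact ⟨hAs _ hA1, hB1⟩) (Or.inl hA1),
          ins_T_mem A B i j _ hA1 hB1, ih1]
        refine ⟨rfl, ?_, ?_⟩ <;>
          (try simp only [show i+1+1 = i+2 from rfl, show j+1+1 = j+2 from rfl]) <;>
          (simp [List.count_cons]; omega)
    · -- first T survives
      have hCA' : ∀ a ∈ A, i+1 < a →
          ∃ u v, (true :: r) = u ++ [true,true,false] ++ v ∧ (i+1) + u.count true + 1 = a := by
        intro a ha hia
        obtain ⟨u, v2, hp0, hc2⟩ := hCA a ha (by omega)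
        obtain ⟨u1, rfl, hp1⟩ := peel hp0 (count_pos_ne_nil (b := true) (by omega))
        simp [List.count_cons] at hc2
        exact ⟨u1, v2, hp1, by omega⟩
      have hCB' : ∀ b ∈ B, j < b →
          ∃ u v, (true :: r) = u ++ [true,false,false] ++ v ∧ j + u.count false + 1 = b := by
        intro b hb hjb
        obtain ⟨u, v2, hp0, hc2⟩ := hCB b hb hjb
        obtain ⟨u1, rfl, hp1⟩ := peel hp0 (by rintro rfl; simp at hp0)
        simp [List.count_cons] at hc2
        exact ⟨u1, v2, hp1, by omega⟩
      obtain ⟨ih1, ih2, ih3⟩ := del_spec A B hAs hBs (i+1) j (true :: r) hA1 hj hCA' hCB'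
      have hsA := congrArg Finset.card (filter_step (A := A) hA1)
      simp [List.count_cons] at ih2 ih3
      rw [del_TT, if_neg hA1, ins_T A B i j _ hA1, ih1]
      refine ⟨rfl, ?_, ?_⟩ <;>
          (try simp only [show i+1+1 = i+2 from rfl, show j+1+1 = j+2 from rfl]) <;>
          (simp [List.count_cons]; omega)
  | true :: false :: r =>
    have hA1 : i+1 ∉ A := by
      intro hA'
      obtain ⟨u, v, hu, hc⟩ := hCA _ hA' (by omega)
      have hcu : u.count true = 0 := by omega
      have hu0 : u = [] := by
        rcases u with _ | ⟨x, u'⟩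
        · rfl
        · simp only [List.cons_append, List.cons.injEq] at hu
          rw [← hu.1] at hcu
          simp [List.count_cons] at hcu
      subst hu0
      simp at hu
    by_cases hB1 : j+1 ∈ B
    · -- B-trio here: r = false :: v'
      obtain ⟨u, v', hu', hc'⟩ := hCB _ hB1 (by omega)
      have hcu' : u.count false = 0 := by omega
      have hu1 : u = [] := by
        rcases u with _ | ⟨x, u1⟩
        · rfl
        · rcases x with _ | _
          · simp at hu'
          · rcases u1 with _ | ⟨y, u2⟩
            · simp at hu'
            · rcases y with _ | _
              · simp [List.count_cons] at hcu'
              · simp at hu'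
      subst hu1
      simp at hu'
      rw [hu'] at hCA hCB ⊢
      have hB2 : j+2 ∉ B := hBs _ hB1
      have hCA' : ∀ a ∈ A, i+1 < a →
          ∃ u w, v' = u ++ [true,true,false] ++ w ∧ (i+1) + u.count true + 1 = a := by
        intro a ha hia
        obtain ⟨u, v2, hp0, hc2⟩ := hCA a ha (by omega)
        obtain ⟨u1, rfl, hp1⟩ := peel hp0 (count_pos_ne_nil (b := true) (by omega))
        simp [List.count_cons] at hc2
        obtain ⟨u2, rfl, hp2⟩ := peel hp1 (by rintro rfl; simp at hp1)
        simp [List.count_cons] at hc2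
        obtain ⟨u3, rfl, hp3⟩ := peel hp2 (by rintro rfl; simp at hp2)
        simp [List.count_cons] at hc2
        exact ⟨u3, v2, hp3, by omega⟩
      have hCB' : ∀ b ∈ B, j+2 < b →
          ∃ u w, v' = u ++ [true,false,false] ++ w ∧ (j+2) + u.count false + 1 = b := by
        intro b hb hjb
        obtain ⟨u, v2, hp0, hc2⟩ := hCB b hb (by omega)
        obtain ⟨u1, rfl, hp1⟩ := peel hp0 (count_pos_ne_nil (b := false) (by omega))
        simp [List.count_cons] at hc2
        obtain ⟨u2, rfl, hp2⟩ := peel hp1 (count_pos_ne_nil (b := false) (by omega))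
        simp [List.count_cons] at hc2
        obtain ⟨u3, rfl, hp3⟩ := peel hp2 (count_pos_ne_nil (b := false) (by omega))
        simp [List.count_cons] at hc2
        exact ⟨u3, v2, hp3, by omega⟩
      obtain ⟨ih1, ih2, ih3⟩ := del_spec A B hAs hBs (i+1) (j+2) v' hA1 hB2 hCA' hCB'
      have hjB := filter_jump (A := B) hB1 hB2
      have hsA := congrArg Finset.card (filter_step (A := A) hA1)
      rw [del_TF_tf A B i j _ (Or.inr hB1) (by push_neg; exact ⟨hi, hj⟩),
        del_F_pos A B (i+1) (j+1) _ hB1,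
        ins_F_mem A B i j _ hA1 hB1, ih1]
      refine ⟨rfl, ?_, ?_⟩ <;>
          (try simp only [show i+1+1 = i+2 from rfl, show j+1+1 = j+2 from rfl]) <;>
          (simp [List.count_cons]; omega)
    · -- both survive
      have hCA' : ∀ a ∈ A, i+1 < a →
          ∃ u v, r = u ++ [true,true,false] ++ v ∧ (i+1) + u.count true + 1 = a := by
        intro a ha hia
        obtain ⟨u, v2, hp0, hc2⟩ := hCA a ha (by omega)
        obtain ⟨u1, rfl, hp1⟩ := peel hp0 (count_pos_ne_nil (b := true) (by omega))
        simp [List.count_cons] at hc2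
        obtain ⟨u2, rfl, hp2⟩ := peel hp1 (by rintro rfl; simp at hp1)
        simp [List.count_cons] at hc2
        exact ⟨u2, v2, hp2, by omega⟩
      have hCB' : ∀ b ∈ B, j+1 < b →
          ∃ u v, r = u ++ [true,false,false] ++ v ∧ (j+1) + u.count false + 1 = b := by
        intro b hb hjb
        obtain ⟨u, v2, hp0, hc2⟩ := hCB b hb (by omega)
        obtain ⟨u1, rfl, hp1⟩ := peel hp0 (count_pos_ne_nil (b := false) (by omega))
        simp [List.count_cons] at hc2
        obtain ⟨u2, rfl, hp2⟩ := peel hp1 (count_pos_ne_nil (b := false) (by omega))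
        simp [List.count_cons] at hc2
        exact ⟨u2, v2, hp2, by omega⟩
      obtain ⟨ih1, ih2, ih3⟩ := del_spec A B hAs hBs (i+1) (j+1) r hA1 hB1 hCA' hCB'
      have hsA := congrArg Finset.card (filter_step (A := A) hA1)
      have hsB := congrArg Finset.card (filter_step (A := B) hB1)
      rw [del_TF_ff A B i j _ (by push_neg; exact ⟨hA1, hB1⟩) (by push_neg; exact ⟨hi, hj⟩),
        ins_T A B i j _ hA1, ins_F A B (i+1) j _ hB1, ih1]
      refine ⟨rfl, ?_, ?_⟩ <;>
          (try simp only [show i+1+1 = i+2 from rfl, show j+1+1 = j+2 from rfl]) <;>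
          (simp [List.count_cons]; omega)
termination_by l.length
decreasing_by all_goals (
  simp only [List.length_cons]
  try (have h1 := congrArg List.length hu; simp at h1)
  try (have h2 := congrArg List.length hu'; simp at h2)
  omega)

lemma bal_finite (p q : ℕ) :
    {l : List Bool | l.count true = p ∧ l.count false = q}.Finite := by
  apply (List.finite_length_eq Bool (p+q)).subset
  rintro l ⟨h1, h2⟩
  have := count_TF_length l
  simp only [Set.mem_setOf_eq]
  omega

lemma bal_zero_left (q : ℕ) :
    {l : List Bool | l.count true = 0 ∧ l.count false = q}.ncard = 1 := by
  have h : {l : List Bool | l.count true = 0 ∧ l.count false = q}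
      = {List.replicate q false} := by
    ext l
    simp only [Set.mem_setOf_eq, Set.mem_singleton_iff]
    constructor
    · rintro ⟨h1, h2⟩
      have hlen : l.length = q := by have := count_TF_length l; omega
      refine List.eq_replicate_iff.2 ⟨hlen, fun b hb => ?_⟩
      cases b
      · rfl
      · exfalso
        have : 0 < l.count true := List.count_pos_iff.2 hb
        omega
    · rintro rfl
      constructor <;> simp [List.count_replicate]
  rw [h, Set.ncard_singleton]

lemma bal_zero_right (p : ℕ) :
    {l : List Bool | l.count true = p ∧ l.count false = 0}.ncard = 1 := by
  have h : {l : List Bool | l.count true = p ∧ l.count false = 0}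
      = {List.replicate p true} := by
    ext l
    simp only [Set.mem_setOf_eq, Set.mem_singleton_iff]
    constructor
    · rintro ⟨h1, h2⟩
      have hlen : l.length = p := by have := count_TF_length l; omega
      refine List.eq_replicate_iff.2 ⟨hlen, fun b hb => ?_⟩
      cases b
      · exfalso
        have : 0 < l.count false := List.count_pos_iff.2 hb
        omega
      · rfl
    · rintro rfl
      constructor <;> simp [List.count_replicate]
  rw [h, Set.ncard_singleton]

lemma bal_ncard : ∀ (k p q : ℕ), p + q = k →
    {l : List Bool | l.count true = p ∧ l.count false = q}.ncard = k.choose p := by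
  intro k
  induction k with
  | zero =>
    intro p q hpq
    have hp : p = 0 := by omega
    have hq : q = 0 := by omega
    subst hp hq
    simpa using bal_zero_left 0
  | succ k ih =>
    intro p q hpq
    match p, q with
    | 0, q => simpa using bal_zero_left q
    | p'+1, 0 =>
      rw [bal_zero_right (p'+1)]
      have : p' + 1 = k + 1 := by omega
      rw [this, Nat.choose_self]
    | p'+1, q'+1 =>
      have hdecomp : {l : List Bool | l.count true = p'+1 ∧ l.count false = q'+1}
          = (fun t => true :: t) '' {l : List Bool | l.count true = p' ∧ l.count false = q'+1}
            ∪ (fun t => false :: t) '' {l : List Bool | l.count true = p'+1 ∧ l.count false = q'} := by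
        ext l
        simp only [Set.mem_union, Set.mem_image, Set.mem_setOf_eq]
        constructor
        · rintro ⟨h1, h2⟩
          match l with
          | [] => simp at h1
          | true :: t =>
            left
            refine ⟨t, ⟨?_, ?_⟩, rfl⟩ <;> simp [List.count_cons] at h1 h2 <;> omega
          | false :: t =>
            right
            refine ⟨t, ⟨?_, ?_⟩, rfl⟩ <;> simp [List.count_cons] at h1 h2 <;> omega
        · rintro (⟨t, ⟨ht1, ht2⟩, rfl⟩ | ⟨t, ⟨ht1, ht2⟩, rfl⟩) <;>
            constructor <;> simp [List.count_cons] <;> omega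
      have hinjT : Function.Injective (fun t : List Bool => true :: t) := by
        intro x y h; simpa using h
      have hinjF : Function.Injective (fun t : List Bool => false :: t) := by
        intro x y h; simpa using h
      have hdisj : Disjoint
          ((fun t => true :: t) '' {l : List Bool | l.count true = p' ∧ l.count false = q'+1})
          ((fun t => false :: t) '' {l : List Bool | l.count true = p'+1 ∧ l.count false = q'}) := by
        rw [Set.disjoint_left]
        rintro l ⟨t, _, rfl⟩ ⟨t', _, h⟩
        simp at h
      rw [hdecomp, Set.ncard_union_eq hdisj ((bal_finite _ _).image _) ((bal_finite _ _).image _),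
        Set.ncard_image_of_injective _ hinjT, Set.ncard_image_of_injective _ hinjF,
        ih p' (q'+1) (by omega), ih (p'+1) q' (by omega)]
      rw [Nat.choose_succ_succ]

end Stmt10

/-- The factor `U_a U_{a+1} D` occurs in `l`: the `a`-th and `(a+1)`-st `U`
letters are adjacent and immediately followed by a `D`. -/
def HasUUDAt (l : List Bool) (a : ℕ) : Prop :=
  ∃ u v : List Bool, l = u ++ [true, true, false] ++ v ∧ u.count true = a - 1

/-- The factor `U D_b D_{b+1}` occurs in `l`: the `b`-th and `(b+1)`-st `D`
letters are adjacent and immediately preceded by a `U`. -/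
def HasUDDAt (l : List Bool) (b : ℕ) : Prop :=
  ∃ u v : List Bool, l = u ++ [true, false, false] ++ v ∧ u.count false = b - 1

/-- For sparse subsets `A, B ⊆ [n-1]`, the number of `(A,B)`-compatible balanced words
with `n` `U`s and `n` `D`s equals the central binomial coefficient
`binom(2(n-|A|-|B|), n-|A|-|B|)`. -/
theorem stmt_10 (n : ℕ) (A B : Finset ℕ)
    (hA : A ⊆ Finset.Icc 1 (n - 1)) (hB : B ⊆ Finset.Icc 1 (n - 1))
    (hAsparse : ∀ a ∈ A, a + 1 ∉ A) (hBsparse : ∀ b ∈ B, b + 1 ∉ B) :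
    {l : List Bool | l.count true = n ∧ l.count false = n ∧
        (∀ a ∈ A, HasUUDAt l a) ∧ (∀ b ∈ B, HasUDDAt l b)}.ncard =
      (2 * (n - A.card - B.card)).choose (n - A.card - B.card) := by
  classical
  set m := n - A.card - B.card with hm
  have h2A : 2 * A.card ≤ (n-1) + 2 - 1 := Stmt10.sparse_card_le hAsparse hA
  have h2B : 2 * B.card ≤ (n-1) + 2 - 1 := Stmt10.sparse_card_le hBsparse hB
  have hA1 : ∀ a ∈ A, 1 ≤ a ∧ a ≤ n - 1 := fun a h => Finset.mem_Icc.1 (hA h)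
  have hB1 : ∀ b ∈ B, 1 ≤ b ∧ b ≤ n - 1 := fun b h => Finset.mem_Icc.1 (hB h)
  have h0A : 0 ∉ A := fun h => by have := (hA1 0 h).1; omega
  have h0B : 0 ∉ B := fun h => by have := (hB1 0 h).1; omega
  have hfA : A.filter (0 < ·) = A := Finset.filter_true_of_mem (fun a h => (hA1 a h).1)
  have hfB : B.filter (0 < ·) = B := Finset.filter_true_of_mem (fun b h => (hB1 b h).1)
  have hfAc : (A.filter (0 < ·)).card = A.card := by rw [hfA]
  have hfBc : (B.filter (0 < ·)).card = B.card := by rw [hfB]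
  have hmn : m + A.card + B.card = n := by omega
  have hset : {l : List Bool | l.count true = n ∧ l.count false = n ∧
        (∀ a ∈ A, HasUUDAt l a) ∧ (∀ b ∈ B, HasUDDAt l b)}
      = (fun w => Stmt10.ins A B 0 0 w) ''
          {w : List Bool | w.count true = m ∧ w.count false = m} := by
    ext l
    simp only [Set.mem_setOf_eq, Set.mem_image]
    constructor
    · rintro ⟨h1, h2, h3, h4⟩
      have hCA : ∀ a ∈ A, 0 < a → ∃ u v, l = u ++ [true,true,false] ++ v ∧
          0 + u.count true + 1 = a := by
        intro a ha _
        obtain ⟨u, v, hu, hc⟩ := h3 a ha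
        exact ⟨u, v, hu, by have := (hA1 a ha).1; omega⟩
      have hCB : ∀ b ∈ B, 0 < b → ∃ u v, l = u ++ [true,false,false] ++ v ∧
          0 + u.count false + 1 = b := by
        intro b hb _
        obtain ⟨u, v, hu, hc⟩ := h4 b hb
        exact ⟨u, v, hu, by have := (hB1 b hb).1; omega⟩
      obtain ⟨ih1, ih2, ih3⟩ :=
        Stmt10.del_spec A B hAsparse hBsparse 0 0 l h0A h0B hCA hCB
      rw [hfAc, hfBc] at ih2 ih3
      exact ⟨Stmt10.del A B 0 0 l, ⟨by omega, by omega⟩, ih1⟩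
    · rintro ⟨w, ⟨hw1, hw2⟩, rfl⟩
      obtain ⟨k1, k2, k3, k4⟩ :=
        Stmt10.ins_spec A B n hAsparse hBsparse hA hB 0 0 w h0A h0B
          (by rw [hfAc, hfBc]; omega) (by rw [hfAc, hfBc]; omega)
      refine ⟨by omega, by omega, ?_, ?_⟩
      · intro a ha
        obtain ⟨u, v, hu, hc⟩ := k3 a ha (hA1 a ha).1
        exact ⟨u, v, hu, by omega⟩
      · intro b hb
        obtain ⟨u, v, hu, hc⟩ := k4 b hb (hB1 b hb).1
        exact ⟨u, v, hu, by omega⟩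
  have hinj : Set.InjOn (fun w => Stmt10.ins A B 0 0 w)
      {w : List Bool | w.count true = m ∧ w.count false = m} := by
    intro x _ y _ heq
    have hx := Stmt10.del_ins A B hAsparse hBsparse 0 0 x h0A h0B
    have hy := Stmt10.del_ins A B hAsparse hBsparse 0 0 y h0A h0B
    simp only at heq
    rw [← hx, ← hy, heq]
  rw [hset, Set.ncard_image_of_injOn hinj, Stmt10.bal_ncard (2*m) m m (by omega)]
end
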